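/- arXiv:2303.03308 — 5 statements merged into one kernel-verified Lean document; each statement's English description precedes it below -/
import Mathlib

section
/- Let Ω be a compact connected abelian topological group, A: Ω → Ω a continuous group automorphism, b ∈ Ω an element of the path component of the identity, T = T_{A,b}: ω ↦ Aω + b, and μ a T-ergodic Borel probability measure on Ω. If g: X → ℝ/ℤ is a continuous map on the suspension X of (Ω,T) and β ∈ ℝ is the ν-a.e. rotation number of g, then there exists a continuous character χ: Ω → ℝ/ℤ with χ∘A = χ and π(β) = χ(b), i.e. β ∈ π^{-1}(χ(b)). -/
open MeasureTheory Filter Topology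

noncomputable section


/-- The identification relation of the suspension of `(Ω, T)`:
`(T^n ω, t) ∼ (ω, t + n)` for all `n : ℤ`. -/
def suspRel {Ω : Type*} (T : Equiv.Perm Ω) : Ω × ℝ → Ω × ℝ → Prop :=
  fun p q => ∃ n : ℤ, q.1 = (T ^ n) p.1 ∧ q.2 = p.2 - n

/-- The suspension `X = (Ω × ℝ)/∼` of `(Ω, T)`. -/
abbrev Susp {Ω : Type*} (T : Equiv.Perm Ω) := Quot (suspRel T)

/-- The suspension flow `τ^s [ω, t] = [ω, t + s]`. -/
def suspFlow {Ω : Type*} (T : Equiv.Perm Ω) (s : ℝ) : Susp T → Susp T :=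
  Quot.map (fun p => (p.1, p.2 + s))
    (fun p q hpq => by
      obtain ⟨n, h1, h2⟩ := hpq
      exact ⟨n, h1, by show q.2 + s = (p.2 + s) - n; rw [h2]; ring⟩)

/-- The suspension measure `ν`, i.e. the image of `μ ⊗ (Lebesgue on (0,1])` under
the quotient map, so that `∫ g dν = ∫_Ω ∫_0^1 g([ω,t]) dt dμ(ω)`. -/
def suspMeasure {Ω : Type*} [MeasurableSpace Ω] (T : Equiv.Perm Ω) (μ : Measure Ω) :
    Measure (Susp T) :=
  Measure.map (Quot.mk (suspRel T)) (μ.prod (volume.restrict (Set.Ioc (0:ℝ) 1)))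

/-- `β` is the ν-a.e. rotation number of `g : X → ℝ/ℤ`: for ν-a.e. `x`, every continuous
lift `g̃ : ℝ → ℝ` of `t ↦ g (τ^t x)` satisfies `g̃(t)/t → β` as `t → ∞`. -/
def IsRotNum {Ω : Type*} [MeasurableSpace Ω] (T : Equiv.Perm Ω) (μ : Measure Ω)
    (g : Susp T → AddCircle (1:ℝ)) (β : ℝ) : Prop :=
  ∀ᵐ x ∂(suspMeasure T μ), ∀ g' : ℝ → ℝ, Continuous g' →
    (∀ t : ℝ, ((g' t : ℝ) : AddCircle (1:ℝ)) = g (suspFlow T t x)) →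
    Tendsto (fun t => g' t / t) atTop (𝓝 β)



namespace RotNumAux
set_option maxHeartbeats 1000000
open Set


local notation "𝕋" => AddCircle (1:ℝ)

instance : Fact ((0:ℝ) < 1) := ⟨one_pos⟩

/-- The canonical section of `ℝ → ℝ/ℤ` with values in `[-1/2, 1/2)`. -/
def rho (v : 𝕋) : ℝ := (AddCircle.equivIco 1 (-(1/2) : ℝ) v : ℝ)

lemma rho_mem (v : 𝕋) : rho v ∈ Ico (-(1/2) : ℝ) (1/2) := by
  have h := (AddCircle.equivIco 1 (-(1/2) : ℝ) v).2
  have : (-(1/2) : ℝ) + 1 = 1/2 := by norm_num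
  exact ⟨h.1, lt_of_lt_of_le h.2 (le_of_eq this)⟩

lemma coe_rho (v : 𝕋) : ((rho v : ℝ) : 𝕋) = v := by
  have : (AddCircle.equivIco 1 (-(1/2) : ℝ)).symm (AddCircle.equivIco 1 (-(1/2) : ℝ) v) = v :=
    (AddCircle.equivIco 1 (-(1/2) : ℝ)).symm_apply_apply v
  exact this

lemma abs_rho_le (v : 𝕋) : |rho v| ≤ 1/2 := by
  have h := rho_mem v
  rw [abs_le]
  constructor <;> [linarith [h.1]; linarith [h.2]]

lemma norm_coe_eq_abs {x : ℝ} (hx : |x| ≤ 1/2) : ‖((x : ℝ) : 𝕋)‖ = |x| := by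
  rw [AddCircle.norm_coe_eq_abs_iff 1 one_ne_zero]
  simpa using hx

lemma norm_eq_abs_rho (v : 𝕋) : ‖v‖ = |rho v| := by
  conv_lhs => rw [← coe_rho v]
  exact norm_coe_eq_abs (abs_rho_le v)

lemma rho_coe {x : ℝ} (hx : x ∈ Ico (-(1/2) : ℝ) (1/2)) : rho ((x : ℝ) : 𝕋) = x := by
  have h1 : ((rho ((x:ℝ):𝕋) : ℝ) : 𝕋) = ((x : ℝ) : 𝕋) := coe_rho _
  have h2 : x ∈ Ico (-(1/2) : ℝ) (-(1/2) + 1) := by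
    rwa [show (-(1/2) : ℝ) + 1 = 1/2 by norm_num]
  have h3 : rho ((x:ℝ):𝕋) ∈ Ico (-(1/2) : ℝ) (-(1/2) + 1) := by
    have := rho_mem ((x:ℝ):𝕋)
    rwa [show (-(1/2) : ℝ) + 1 = 1/2 by norm_num]
  exact (AddCircle.coe_eq_coe_iff_of_mem_Ico h3 h2).1 h1

lemma rho_zero : rho 0 = 0 := by
  have : ((0:ℝ) : 𝕋) = (0 : 𝕋) := by norm_cast
  rw [← this, rho_coe] ; norm_num

lemma continuousAt_rho {v : 𝕋} (hv : ‖v‖ < 1/2) : ContinuousAt rho v := by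
  have hne : v ≠ ((-(1/2) : ℝ) : 𝕋) := by
    intro h
    rw [h, norm_coe_eq_abs (by rw [abs_neg, abs_of_nonneg] <;> norm_num)] at hv
    rw [abs_neg, abs_of_nonneg (by norm_num : (0:ℝ) ≤ 1/2)] at hv
    norm_num at hv
  exact continuousAt_subtype_val.comp (AddCircle.continuousAt_equivIco 1 _ hne)

/-- the coercion `ℝ → 𝕋` is continuous -/
lemma continuous_coe : Continuous (fun r : ℝ => ((r : ℝ) : 𝕋)) :=
  AddCircle.continuous_mk' 1

lemma coe_int_eq_zero (k : ℤ) : (((k : ℝ)) : 𝕋) = 0 := by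
  rw [AddCircle.coe_eq_zero_iff]
  exact ⟨k, by simp⟩

lemma coe_eq_coe_iff {x y : ℝ} : ((x:ℝ):𝕋) = ((y:ℝ):𝕋) ↔ ∃ k : ℤ, x = y + k := by
  constructor
  · intro h
    rw [QuotientAddGroup.eq_iff_sub_mem] at h
    obtain ⟨k, hk⟩ := AddSubgroup.mem_zmultiples_iff.1 h
    refine ⟨k, ?_⟩
    have : (k : ℝ) = x - y := by rw [← hk]; simp
    linarith
  · rintro ⟨k, rfl⟩
    rw [QuotientAddGroup.eq_iff_sub_mem]
    refine AddSubgroup.mem_zmultiples_iff.2 ⟨k, by simp⟩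

lemma coe_eq_zero_iff' {x : ℝ} : ((x:ℝ):𝕋) = 0 ↔ ∃ k : ℤ, x = k := by
  have : (0:𝕋) = ((0:ℝ):𝕋) := by norm_cast
  rw [this, coe_eq_coe_iff]
  simp


section IntConst

variable {X : Type*} [TopologicalSpace X]

/-- A continuous integer-valued function on a preconnected space is constant. -/
lemma intval_const [PreconnectedSpace X] {F : X → ℝ} (hF : Continuous F)
    (h : ∀ x, ∃ k : ℤ, F x = k) (x y : X) : F x = F y := by
  by_contra hne
  wlog hxy : F x < F y generalizing x y
  · exact this y x (Ne.symm hne) (lt_of_le_of_ne (not_lt.1 hxy) (Ne.symm hne))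
  obtain ⟨k, hk⟩ := h x
  obtain ⟨l, hl⟩ := h y
  have hkl : (k : ℝ) < l := by rw [← hk, ← hl]; exact hxy
  have hkl' : k < l := by exact_mod_cast hkl
  have hmem : (k : ℝ) + 1/2 ∈ Icc (F x) (F y) := by
    constructor
    · rw [hk]; linarith
    · rw [hl]
      have : (k : ℝ) + 1 ≤ l := by exact_mod_cast hkl'
      linarith
  obtain ⟨z, hz⟩ := intermediate_value_univ x y hF hmem
  obtain ⟨m, hm⟩ := h z
  rw [hm] at hz
  have : (2*m : ℝ) = 2*k + 1 := by linarith
  have : (2*m : ℤ) = 2*k + 1 := by exact_mod_cast this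
  omega

/-- Variant on a preconnected subset. -/
lemma intval_const_on {s : Set X} (hs : IsPreconnected s) {F : X → ℝ} (hF : Continuous F)
    (h : ∀ x ∈ s, ∃ k : ℤ, F x = k) {x y : X} (hx : x ∈ s) (hy : y ∈ s) : F x = F y := by
  haveI : PreconnectedSpace s := Subtype.preconnectedSpace hs
  have := intval_const (X := s) (F := fun z => F z.1) (hF.comp continuous_subtype_val)
    (fun z => h z.1 z.2) ⟨x, hx⟩ ⟨y, hy⟩
  simpa using this

end IntConst

section Lifts

variable {X : Type*} [TopologicalSpace X]

/-- `u : X → 𝕋` admits a continuous lift to `ℝ`. -/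
def Lifts (u : X → 𝕋) : Prop :=
  ∃ U : X → ℝ, Continuous U ∧ ∀ x, ((U x : ℝ) : 𝕋) = u x

lemma Lifts.zero : Lifts (fun _ : X => (0 : 𝕋)) :=
  ⟨fun _ => 0, continuous_const, fun _ => by norm_cast⟩

lemma Lifts.add {u v : X → 𝕋} (hu : Lifts u) (hv : Lifts v) : Lifts (u + v) := by
  obtain ⟨U, hU, hUl⟩ := hu
  obtain ⟨V, hV, hVl⟩ := hv
  exact ⟨U + V, hU.add hV, fun x => by show _ = u x + v x; rw [← hUl x, ← hVl x, ← AddCircle.coe_add]; rfl⟩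

lemma Lifts.add' {u v : X → 𝕋} (hu : Lifts u) (hv : Lifts v) :
    Lifts (fun x => u x + v x) := Lifts.add hu hv

lemma Lifts.neg {u : X → 𝕋} (hu : Lifts u) : Lifts (fun x => -u x) := by
  obtain ⟨U, hU, hUl⟩ := hu
  exact ⟨fun x => -(U x), hU.neg, fun x => by show _ = -(u x); rw [← hUl x, ← AddCircle.coe_neg]⟩

lemma Lifts.comp {Y : Type*} [TopologicalSpace Y] {u : X → 𝕋} (hu : Lifts u)
    {φ : Y → X} (hφ : Continuous φ) : Lifts (fun y => u (φ y)) := by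
  obtain ⟨U, hU, hUl⟩ := hu
  exact ⟨U ∘ φ, hU.comp hφ, fun y => hUl (φ y)⟩

lemma lifts_of_small {u : X → 𝕋} (hu : Continuous u) (hsmall : ∀ x, ‖u x‖ < 1/2) :
    Lifts u := by
  refine ⟨fun x => rho (u x), ?_, fun x => coe_rho _⟩
  rw [continuous_iff_continuousAt]
  exact fun x => (continuousAt_rho (hsmall x)).comp hu.continuousAt

end Lifts

section Grid

/-- clamp `t` into `[lo, hi]`. -/
def clamp (t lo hi : ℝ) : ℝ := max lo (min t hi)

lemma clamp_mem {lo hi : ℝ} (h : lo ≤ hi) (t : ℝ) : clamp t lo hi ∈ Icc lo hi :=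
  ⟨le_max_left _ _, max_le h (min_le_right _ _)⟩

lemma clamp_of_mem {lo hi t : ℝ} (h : t ∈ Icc lo hi) : clamp t lo hi = t := by
  rw [clamp, min_eq_left h.2, max_eq_right h.1]

lemma clamp_of_le {lo hi t : ℝ} (h : t ≤ lo) (h' : lo ≤ hi) : clamp t lo hi = lo := by
  rw [clamp, min_eq_left (h.trans h'), max_eq_left h]

lemma continuous_clamp (lo hi : ℝ) : Continuous (fun t => clamp t lo hi) :=
  continuous_const.max (continuous_id.min continuous_const)

variable (q : ℝ → 𝕋)

/-- Grid-based partial lift of `q` along `[a, a + m δ]`. -/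
def gridSum (a δ : ℝ) (m : ℕ) (t : ℝ) : ℝ :=
  ∑ k ∈ Finset.range m,
    rho (q (clamp t (a + k*δ) (a + (k+1)*δ)) - q (a + k*δ))

lemma gridSum_zero_pt {a δ : ℝ} (m : ℕ) (hδ : 0 ≤ δ) {t : ℝ} (ht : t ≤ a) :
    gridSum q a δ m t = 0 := by
  apply Finset.sum_eq_zero
  intro k _
  have hk0 : (0:ℝ) ≤ (k:ℝ) * δ := mul_nonneg k.cast_nonneg hδ
  have h1 : a ≤ a + k*δ := by linarith
  have h2 : (a + k*δ) ≤ a + (k+1)*δ := by nlinarith [k.cast_nonneg (α := ℝ)]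
  rw [clamp_of_le (ht.trans h1) h2, sub_self, rho_zero]

lemma gridSum_lift (a δ : ℝ) (hδ : 0 ≤ δ) (m : ℕ) (t : ℝ) :
    ((gridSum q a δ m t : ℝ) : 𝕋) = q (clamp t a (a + m*δ)) - q a := by
  induction m with
  | zero =>
      simp only [gridSum, Finset.range_zero, Finset.sum_empty, Nat.cast_zero, zero_mul, add_zero]
      have : clamp t a a = a := by
        rcases le_total t a with h | h
        · exact clamp_of_le h le_rfl
        · rw [clamp, min_eq_right h, max_self]
      rw [this, sub_self]
      norm_cast
  | succ m ih =>
      have hstep : gridSum q a δ (m+1) t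
          = gridSum q a δ m t + rho (q (clamp t (a + m*δ) (a + (m+1)*δ)) - q (a + m*δ)) := by
        rw [gridSum, Finset.sum_range_succ]
        push_cast
        rfl
      have hmδ : (0:ℝ) ≤ (m:ℝ) * δ := mul_nonneg m.cast_nonneg hδ
      have hmono : a + m*δ ≤ a + (m+1)*δ := by nlinarith [m.cast_nonneg (α := ℝ)]
      have ha : a ≤ a + m*δ := by linarith
      rw [hstep, AddCircle.coe_add, ih, coe_rho]
      rcases le_total t (a + m*δ) with h | h
      · have e1 : clamp t (a + m*δ) (a + (m+1)*δ) = a + m*δ := clamp_of_le h hmono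
        have e2 : clamp t a (a + ((m:ℝ)+1)*δ) = clamp t a (a + m*δ) := by
          rw [clamp, clamp, min_eq_left h, min_eq_left (h.trans hmono)]
        rw [e1]
        push_cast
        rw [e2]
        abel
      · have e1 : clamp t a (a + m*δ) = a + m*δ := by
          rw [clamp, min_eq_right h, max_eq_right ha]
        have e2 : clamp t (a + m*δ) (a + ((m:ℝ)+1)*δ) = clamp t a (a + ((m:ℝ)+1)*δ) := by
          rw [clamp, clamp, max_eq_right, max_eq_right]
          · exact ha.trans (le_min h hmono)
          · exact le_min h hmono
        rw [e1]
        push_cast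
        rw [e2]
        abel

lemma gridSum_cont (a δ : ℝ) (hδ : 0 ≤ δ) (m : ℕ) (hq : Continuous q)
    (hsmall : ∀ k : ℕ, k < m → ∀ s ∈ Icc (a + k*δ) (a + (k+1)*δ),
      ‖q s - q (a + k*δ)‖ < 1/2) :
    Continuous (gridSum q a δ m) := by
  apply continuous_finset_sum
  intro k hk
  rw [Finset.mem_range] at hk
  have hmono : a + k*δ ≤ a + (k+1)*δ := by nlinarith [k.cast_nonneg (α := ℝ)]
  have hcont : Continuous (fun t => q (clamp t (a + k*δ) (a + (k+1)*δ)) - q (a + k*δ)) :=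
    (hq.comp (continuous_clamp _ _)).sub continuous_const
  rw [continuous_iff_continuousAt]
  intro t
  have h1 : ContinuousAt (rho ∘ fun t => q (clamp t (a + k*δ) (a + (k+1)*δ)) - q (a + k*δ)) t :=
    ContinuousAt.comp (continuousAt_rho (hsmall k hk _ (clamp_mem hmono t)))
      (hcont.continuousAt (x := t))
  exact h1

/-- Uniform 1/2-smallness modulus on a compact slab. -/
lemma exists_delta {Z : Type*} [TopologicalSpace Z] [CompactSpace Z] (q : Z → ℝ → 𝕋)
    (hq : Continuous fun p : Z × ℝ => q p.1 p.2) (a b : ℝ) :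
    ∃ δ > 0, ∀ (z : Z) (s t : ℝ), s ∈ Icc a b → t ∈ Icc a b → |s - t| ≤ δ →
      ‖q z s - q z t‖ < 1/2 := by
  have h1 : Continuous fun p : Z × ℝ × ℝ => q p.1 p.2.1 :=
    hq.comp (continuous_fst.prodMk (continuous_fst.comp continuous_snd))
  have h2 : Continuous fun p : Z × ℝ × ℝ => q p.1 p.2.2 :=
    hq.comp (continuous_fst.prodMk (continuous_snd.comp continuous_snd))
  have hcont : Continuous fun p : Z × ℝ × ℝ => ‖q p.1 p.2.1 - q p.1 p.2.2‖ := (h1.sub h2).norm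
  set K : Set (Z × ℝ × ℝ) := univ ×ˢ (Icc a b ×ˢ Icc a b) with hK
  have hKc : IsCompact K := isCompact_univ.prod (isCompact_Icc.prod isCompact_Icc)
  set C : Set (Z × ℝ × ℝ) := K ∩ {p | 1/2 ≤ ‖q p.1 p.2.1 - q p.1 p.2.2‖} with hC
  have hCc : IsCompact C := hKc.inter_right (isClosed_le continuous_const hcont)
  rcases C.eq_empty_or_nonempty with hemp | hne
  · refine ⟨1, one_pos, fun z s t hs ht _ => ?_⟩
    by_contra hcon
    have : (z, s, t) ∈ C := ⟨⟨mem_univ _, hs, ht⟩, not_lt.1 hcon⟩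
    rw [hemp] at this
    exact this
  · obtain ⟨p₀, hp₀, hmin'⟩ := hCc.exists_isMinOn hne
      (((continuous_fst.comp continuous_snd).sub (continuous_snd.comp continuous_snd)).abs.continuousOn
        (s := C))
    have hmin : ∀ p ∈ C, |p₀.2.1 - p₀.2.2| ≤ |p.2.1 - p.2.2| := fun p hp => hmin' hp
    have hp₀ne : p₀.2.1 ≠ p₀.2.2 := by
      intro h
      have h5 := hp₀.2
      simp only [mem_setOf_eq, h, sub_self, norm_zero] at h5
      linarith
    have hε : 0 < |p₀.2.1 - p₀.2.2| := abs_pos.2 (sub_ne_zero.2 hp₀ne)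
    refine ⟨|p₀.2.1 - p₀.2.2| / 2, by linarith, fun z s t hs ht hst => ?_⟩
    by_contra hcon
    have hmem : (z, s, t) ∈ C := ⟨⟨mem_univ _, hs, ht⟩, not_lt.1 hcon⟩
    have := hmin _ hmem
    simp only at this
    linarith

/-- Every continuous `q : ℝ → 𝕋` lifts continuously on a compact interval. -/
lemma lift_Icc (q : ℝ → 𝕋) (hq : Continuous q) (a b : ℝ) :
    ∃ Q : ℝ → ℝ, Continuous Q ∧ ∀ t ∈ Icc a b, ((Q t : ℝ) : 𝕋) = q t := by
  rcases le_total b a with hba | hab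
  · refine ⟨fun _ => rho (q a), continuous_const, fun t ht => ?_⟩
    have : t = a := le_antisymm (ht.2.trans hba) ht.1
    rw [this, coe_rho]
  · obtain ⟨δ, hδpos, hδ⟩ := exists_delta (Z := Unit) (fun _ t => q t)
      (hq.comp continuous_snd) a b
    set m : ℕ := ⌈(b - a) / δ⌉₊ + 1 with hm
    have hm0 : 0 < (m:ℝ) := by positivity
    set s : ℝ := (b - a) / m with hs
    have hs0 : 0 ≤ s := by
      apply div_nonneg (by linarith) hm0.le
    have hms : a + (m:ℝ) * s = b := by
      rw [hs, mul_div_assoc', mul_div_cancel_left₀ _ hm0.ne']; ring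
    have hsδ : s ≤ δ := by
      rw [hs, div_le_iff₀ hm0]
      have h1 : (b - a) / δ ≤ (⌈(b - a) / δ⌉₊ : ℝ) := Nat.le_ceil _
      have h2 : ((⌈(b - a) / δ⌉₊ : ℝ)) + 1 = (m:ℝ) := by rw [hm]; push_cast; ring
      have h3 : b - a ≤ δ * (⌈(b - a) / δ⌉₊ : ℝ) := (div_le_iff₀' hδpos).1 h1
      have h4 : δ * (m:ℝ) = δ * (⌈(b - a) / δ⌉₊ : ℝ) + δ := by rw [← h2]; ring
      linarith
    have hsub : ∀ k : ℕ, k < m → Icc (a + k*s) (a + (k+1)*s) ⊆ Icc a b := by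
      intro k hk
      apply Icc_subset_Icc
      · nlinarith [k.cast_nonneg (α := ℝ)]
      · have : ((k:ℝ)+1) ≤ (m:ℝ) := by exact_mod_cast hk
        nlinarith
    have hsmall : ∀ k : ℕ, k < m → ∀ u ∈ Icc (a + k*s) (a + (k+1)*s),
        ‖q u - q (a + k*s)‖ < 1/2 := by
      intro k hk u hu
      have h1 : u ∈ Icc a b := hsub k hk hu
      have h2 : (a + k*s) ∈ Icc a b := hsub k hk ⟨le_rfl, by nlinarith [k.cast_nonneg (α := ℝ)]⟩
      refine hδ () u (a + k*s) h1 h2 ?_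
      rw [abs_le]
      constructor
      · have := hu.1; linarith [hsδ]
      · have := hu.2; nlinarith [hsδ]
    refine ⟨fun t => rho (q a) + gridSum q a s m t, ?_, fun t ht => ?_⟩
    · exact continuous_const.add (gridSum_cont q a s hs0 m hq hsmall)
    · rw [AddCircle.coe_add, coe_rho, gridSum_lift q a s hs0 m t, hms, clamp_of_mem ht]
      abel

/-- Every continuous `q : ℝ → 𝕋` lifts continuously on all of `ℝ`. -/
lemma lift_real (q : ℝ → 𝕋) (hq : Continuous q) :
    ∃ Q : ℝ → ℝ, Continuous Q ∧ ∀ t : ℝ, ((Q t : ℝ) : 𝕋) = q t := by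
  have key : ∀ n : ℕ, ∃ Q : ℝ → ℝ, Continuous Q ∧
      (∀ t ∈ Icc (-(n:ℝ)) n, ((Q t : ℝ) : 𝕋) = q t) ∧ Q 0 = rho (q 0) := by
    intro n
    obtain ⟨Q, hQc, hQl⟩ := lift_Icc q hq (-(n:ℝ)) n
    have h0 : (0:ℝ) ∈ Icc (-(n:ℝ)) n := by
      constructor <;> simp [n.cast_nonneg]
    have : ((Q 0 : ℝ) : 𝕋) = ((rho (q 0) : ℝ) : 𝕋) := by rw [hQl 0 h0, coe_rho]
    obtain ⟨k, hk⟩ := coe_eq_coe_iff.1 this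
    refine ⟨fun t => Q t - k, hQc.sub continuous_const, fun t ht => ?_, by show Q 0 - (k:ℝ) = _; rw [hk]; ring⟩
    rw [AddCircle.coe_sub, coe_int_eq_zero, hQl t ht, sub_zero]
  choose R hRc hRl hR0 using key
  have agree : ∀ (n m : ℕ) (t : ℝ), t ∈ Icc (-(n:ℝ)) n → t ∈ Icc (-(m:ℝ)) m →
      R n t = R m t := by
    intro n m t htn htm
    set c : ℝ := min (n:ℝ) (m:ℝ) with hc
    have hc0 : (0:ℝ) ≤ c := le_min n.cast_nonneg m.cast_nonneg
    have ht : t ∈ Icc (-c) c := by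
      refine ⟨?_, le_min htn.2 htm.2⟩
      rcases min_cases (n:ℝ) (m:ℝ) with h | h <;> rw [hc, h.1]
      · exact htn.1
      · exact htm.1
    have h0 : (0:ℝ) ∈ Icc (-c) c := ⟨by linarith, hc0⟩
    have hsub : Icc (-c) c ⊆ Icc (-(n:ℝ)) n := by
      apply Icc_subset_Icc
      · simp only [neg_le_neg_iff, hc]
        exact min_le_left _ _
      · exact min_le_left _ _
    have hsub' : Icc (-c) c ⊆ Icc (-(m:ℝ)) m := by
      apply Icc_subset_Icc
      · simp only [neg_le_neg_iff, hc]
        exact min_le_right _ _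
      · exact min_le_right _ _
    have hF : ∀ x ∈ Icc (-c) c, ∃ k : ℤ, R n x - R m x = (k:ℝ) := by
      intro x hx
      apply coe_eq_zero_iff'.1
      rw [AddCircle.coe_sub, hRl n x (hsub hx), hRl m x (hsub' hx), sub_self]
    have := intval_const_on (isPreconnected_Icc) ((hRc n).sub (hRc m)) hF ht h0
    simp only [Pi.sub_apply, hR0] at this
    have h2 : R n t - R m t = (0:ℝ) := by
      rw [this]; ring
    linarith
  refine ⟨fun t => R ⌈|t|⌉₊ t, ?_, fun t => ?_⟩
  · rw [continuous_iff_continuousAt]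
    intro t₀
    set n : ℕ := ⌈|t₀|⌉₊ + 1 with hn
    have hopen : IsOpen {t : ℝ | |t| < (n:ℝ)} := isOpen_lt continuous_abs continuous_const
    have ht₀ : t₀ ∈ {t : ℝ | |t| < (n:ℝ)} := by
      have h1 : |t₀| ≤ (⌈|t₀|⌉₊ : ℝ) := Nat.le_ceil _
      have h2 : ((⌈|t₀|⌉₊ : ℝ)) < n := by rw [hn]; push_cast; linarith
      exact lt_of_le_of_lt h1 h2
    have heq : ∀ t ∈ {t : ℝ | |t| < (n:ℝ)}, R ⌈|t|⌉₊ t = R n t := by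
      intro t ht
      have ht' : |t| < (n:ℝ) := ht
      apply agree
      · have := Nat.le_ceil |t|
        constructor
        · have := abs_nonneg t
          have h3 := neg_abs_le t
          linarith
        · linarith [le_abs_self t]
      · constructor
        · linarith [neg_abs_le t]
        · linarith [le_abs_self t]
    refine ContinuousAt.congr ((hRc n).continuousAt) ?_
    filter_upwards [hopen.mem_nhds ht₀] with t ht
    exact (heq t ht).symm
  · apply hRl
    have := Nat.le_ceil |t|
    constructor
    · linarith [neg_abs_le t]
    · linarith [le_abs_self t]

end Grid

section Group

variable {Ω : Type*} [TopologicalSpace Ω] [AddCommGroup Ω] [IsTopologicalAddGroup Ω]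
  [CompactSpace Ω] [ConnectedSpace Ω]

/-- Uniform smallness of translation differences. -/
lemma unif_small {h : Ω → 𝕋} (hh : Continuous h) {ε : ℝ} (hε : 0 < ε) :
    ∃ U : Set Ω, IsOpen U ∧ (0:Ω) ∈ U ∧ ∀ c ∈ U, ∀ ω : Ω, ‖h (ω + c) - h ω‖ < ε := by
  set n : Set (Ω × Ω) := {p | ‖h (p.1 + p.2) - h p.1‖ < ε} with hn
  have hno : IsOpen n :=
    isOpen_lt ((hh.comp continuous_add).sub (hh.comp continuous_fst)).norm continuous_const
  have hsub : univ ×ˢ ({0} : Set Ω) ⊆ n := by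
    rintro ⟨ω, c⟩ ⟨-, hc⟩
    have : c = 0 := mem_singleton_iff.1 hc
    simp only [hn, mem_setOf_eq, this, add_zero, sub_self, norm_zero]
    exact hε
  obtain ⟨u, v, hu, hv, huu, hvv, huv⟩ :=
    generalized_tube_lemma isCompact_univ isCompact_singleton hno hsub
  refine ⟨v, hv, hvv (mem_singleton 0), fun c hc ω => ?_⟩
  have hmem : (ω, c) ∈ u ×ˢ v := ⟨huu (mem_univ ω), hc⟩
  have h5 := huv hmem
  simpa only [hn, mem_setOf_eq] using h5

/-- Every translation difference of a continuous circle-valued map on a compact connected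
abelian group lifts to `ℝ`. -/
lemma star {h : Ω → 𝕋} (hh : Continuous h) (c : Ω) :
    Lifts (fun ω => h (ω + c) - h ω) := by
  obtain ⟨U, hUo, hU0, hUs⟩ := unif_small hh (by norm_num : (0:ℝ) < 1/2)
  set U' : Set Ω := U ∩ {x | -x ∈ U} with hU'
  have hU'o : IsOpen U' := hUo.inter (hUo.preimage continuous_neg)
  have hU'0 : (0:Ω) ∈ U' := ⟨hU0, by simpa using hU0⟩
  have hsmalllift : ∀ e ∈ U, Lifts (fun ω : Ω => h (ω + e) - h ω) := by
    intro e he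
    exact lifts_of_small ((hh.comp (continuous_id.add continuous_const)).sub hh)
      (fun ω => hUs e he ω)
  have step : ∀ d : Ω, Lifts (fun ω => h (ω + d) - h ω) → ∀ e ∈ U', 
      Lifts (fun ω => h (ω + (d + e)) - h ω) := by
    intro d hd e he
    have h1 : Lifts (fun ω : Ω => h ((ω + d) + e) - h (ω + d)) :=
      (hsmalllift e he.1).comp (continuous_id.add continuous_const)
    have h2 := (h1.add' hd)
    have : (fun ω : Ω => (h ((ω + d) + e) - h (ω + d)) + (h (ω + d) - h ω))
        = fun ω => h (ω + (d + e)) - h ω := by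
      funext ω
      rw [sub_add_sub_cancel, add_assoc]
    rwa [this] at h2
  set S : Set Ω := {c | Lifts (fun ω => h (ω + c) - h ω)} with hS
  have hS0 : (0:Ω) ∈ S := by
    refine ⟨fun _ => 0, continuous_const, fun ω => ?_⟩
    show ((0:ℝ) : 𝕋) = h (ω + 0) - h ω
    rw [add_zero, sub_self]
    norm_cast
  have hSopen : IsOpen S := by
    rw [isOpen_iff_mem_nhds]
    intro d hd
    have hsub : {x : Ω | x - d ∈ U'} ⊆ S := by
      intro x hx
      have := step d hd (x - d) hx
      rwa [add_sub_cancel] at this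
    exact Filter.mem_of_superset
      ((hU'o.preimage (continuous_id.sub continuous_const)).mem_nhds (by simpa using hU'0)) hsub
  have hSclosed : IsClosed S := by
    rw [← isOpen_compl_iff, isOpen_iff_mem_nhds]
    intro d hd
    have hsub : {x : Ω | x - d ∈ U'} ⊆ Sᶜ := by
      intro x hx hxS
      apply hd
      have hmem : d - x ∈ U' := by
        rw [show d - x = -(x - d) from (neg_sub x d).symm]
        exact ⟨hx.2, by simpa using hx.1⟩
      have := step x hxS (d - x) hmem
      rwa [add_sub_cancel] at this
    exact Filter.mem_of_superset
      ((hU'o.preimage (continuous_id.sub continuous_const)).mem_nhds (by simpa using hU'0)) hsub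
  have : S = univ := IsClopen.eq_univ ⟨hSclosed, hSopen⟩ ⟨0, hS0⟩
  have hc : c ∈ S := this ▸ mem_univ c
  exact hc

/-- A "character plus constant" that lifts must be the trivial character,
and the lift is constant. -/
lemma char_triv {ψ : Ω → 𝕋} (hadd : ∀ x y, ψ (x + y) = ψ x + ψ y) (κ : 𝕋) {W : Ω → ℝ}
    (hWc : Continuous W) (hlift : ∀ ω, ((W ω : ℝ) : 𝕋) = ψ ω + κ) :
    (∀ ω, ψ ω = 0) ∧ (∀ ω, W ω = W 0) := by
  have hψ0 : ψ 0 = 0 := by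
    have := hadd 0 0
    rw [add_zero] at this
    exact (left_eq_add.1 this)
  set V : Ω × Ω → ℝ := fun p => W (p.1 + p.2) - W p.1 - W p.2 + W 0 with hV
  have hVc : Continuous V :=
    (((hWc.comp continuous_add).sub (hWc.comp continuous_fst)).sub
      (hWc.comp continuous_snd)).add continuous_const
  have hVint : ∀ p : Ω × Ω, ∃ k : ℤ, V p = (k : ℝ) := by
    intro p
    apply coe_eq_zero_iff'.1
    rw [hV]
    simp only
    rw [AddCircle.coe_add, AddCircle.coe_sub, AddCircle.coe_sub, hlift, hlift, hlift, hlift,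
      hadd, hψ0]
    abel
  have hVconst : ∀ p : Ω × Ω, V p = V (0, 0) := fun p => intval_const hVc hVint p (0, 0)
  have hV00 : V (0, 0) = 0 := by rw [hV]; simp
  have hWadd : ∀ x y : Ω, W (x + y) - W 0 = (W x - W 0) + (W y - W 0) := by
    intro x y
    have := hVconst (x, y)
    rw [hV00, hV] at this
    simp only at this
    linarith
  set W₁ : Ω → ℝ := fun x => W x - W 0 with hW₁
  have hW₁c : Continuous W₁ := hWc.sub continuous_const
  have hW₁n : ∀ (n : ℕ) (x : Ω), W₁ (n • x) = n * W₁ x := by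
    intro n
    induction n with
    | zero => intro x; simp [hW₁]
    | succ n ih =>
        intro x
        rw [succ_nsmul, hW₁]
        simp only
        have h1 := hWadd (n • x) x
        push_cast
        have h2 := ih x
        rw [hW₁] at h2
        simp only at h1 h2 ⊢
        nlinarith [h1, h2]
  obtain ⟨xm, -, hxm⟩ := isCompact_univ.exists_isMaxOn (univ_nonempty (α := Ω))
    hW₁c.abs.continuousOn
  set C : ℝ := |W₁ xm| with hC
  have hbound : ∀ x : Ω, |W₁ x| ≤ C := fun x => hxm (mem_univ x)
  have hW₁0 : ∀ x, W₁ x = 0 := by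
    intro x
    by_contra hne
    have hpos : 0 < |W₁ x| := abs_pos.2 hne
    obtain ⟨n, hn⟩ := exists_nat_gt (C / |W₁ x|)
    have h1 : (n : ℝ) * |W₁ x| ≤ C := by
      have := hbound (n • x)
      rwa [hW₁n n x, abs_mul, abs_of_nonneg (n.cast_nonneg (α := ℝ))] at this
    have h2 : C < (n:ℝ) * |W₁ x| := by
      rw [div_lt_iff₀ hpos] at hn
      linarith
    linarith
  have hWconst : ∀ ω, W ω = W 0 := by
    intro ω
    have := hW₁0 ω
    rw [hW₁] at this
    simp only at this
    linarith
  refine ⟨fun ω => ?_, hWconst⟩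
  have h1 : ((W ω : ℝ) : 𝕋) = ψ ω + κ := hlift ω
  have h2 : ((W 0 : ℝ) : 𝕋) = κ := by rw [hlift 0, hψ0, zero_add]
  rw [hWconst ω, h2] at h1
  exact right_eq_add.1 h1

end Group

section Brusch

open TopologicalSpace MeasureTheory

variable {Ω : Type*} [TopologicalSpace Ω] [AddCommGroup Ω] [IsTopologicalAddGroup Ω]
  [CompactSpace Ω] [ConnectedSpace Ω] [T2Space Ω] [MeasurableSpace Ω] [BorelSpace Ω]

/-- Bruschlinsky decomposition: every continuous map from a compact connected abelian group
to the circle is a character plus a constant plus a nullhomotopic map. -/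
theorem bruschlinsky {h : Ω → 𝕋} (hh : Continuous h) :
    ∃ (χ : Ω → 𝕋) (s : Ω → ℝ), Continuous χ ∧ Continuous s ∧
      (∀ x y, χ (x + y) = χ x + χ y) ∧ (∀ x, h x = χ x + h 0 + ((s x : ℝ) : 𝕋)) := by
  -- choose lifts of all translation differences
  have hstar : ∀ c : Ω, ∃ L : Ω → ℝ, Continuous L ∧ ∀ x, ((L x : ℝ) : 𝕋) = h (x + c) - h x :=
    fun c => star hh c
  choose ℓ hℓc hℓl using hstar
  set ct : Ω → Ω → ℝ := fun x y => ℓ y x - ℓ y 0 with hct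
  have ct_lift : ∀ x y, ((ct x y : ℝ) : 𝕋) = (h (x + y) - h x) - (h y - h 0) := by
    intro x y
    rw [hct]
    simp only
    rw [AddCircle.coe_sub, hℓl, hℓl, zero_add]
  have ct_cont_x : ∀ y, Continuous (fun x => ct x y) := fun y => (hℓc y).sub continuous_const
  have ct_zero_left : ∀ y, ct 0 y = 0 := fun y => sub_self _
  -- choice-independence of the normalized lifts
  have key : ∀ (y : Ω) (L : Ω → ℝ), Continuous L → (∀ x, ((L x : ℝ) : 𝕋) = h (x + y) - h x) →
      ∀ x, ct x y = L x - L 0 := by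
    intro y L hLc hLl x
    have hFc : Continuous (fun x => ℓ y x - L x) := (hℓc y).sub hLc
    have hFi : ∀ x, ∃ k : ℤ, ℓ y x - L x = (k:ℝ) := by
      intro x
      apply coe_eq_zero_iff'.1
      rw [AddCircle.coe_sub, hℓl, hLl, sub_self]
    have := intval_const hFc hFi x 0
    rw [hct]
    simp only
    linarith
  -- joint continuity of ct
  have aux : ∀ {ε' : ℝ}, 0 < ε' → ε' < 1/2 →
      ∀ U : Set Ω, (∀ c ∈ U, ∀ ω : Ω, ‖h (ω + c) - h ω‖ < ε') →
      ∀ y₀, ∀ e ∈ U, ∀ x, |ct x (y₀ + e) - ct x y₀| ≤ 2 * ε' := by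
    intro ε' hε'pos hε'half U hU y₀ e he x
    set m₀ : Ω → ℝ := fun x => rho (h ((x + y₀) + e) - h (x + y₀)) with hm₀
    have hm₀small : ∀ x : Ω, ‖h ((x + y₀) + e) - h (x + y₀)‖ < ε' := fun x => hU e he (x + y₀)
    have hm₀c : Continuous m₀ := by
      rw [continuous_iff_continuousAt]
      intro x
      have hi : Continuous (fun x : Ω => h ((x + y₀) + e) - h (x + y₀)) :=
        ((hh.comp ((continuous_id.add continuous_const).add continuous_const)).sub
          (hh.comp (continuous_id.add continuous_const)))
      have hcomp : ContinuousAt (rho ∘ fun x : Ω => h ((x + y₀) + e) - h (x + y₀)) x :=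
        ContinuousAt.comp
          (continuousAt_rho (lt_trans (hm₀small x) hε'half)) (hi.continuousAt (x := x))
      exact hcomp
    have hm₀abs : ∀ x, |m₀ x| ≤ ε' := by
      intro x
      rw [hm₀]
      simp only
      rw [← norm_eq_abs_rho]
      exact (hm₀small x).le
    set L : Ω → ℝ := fun x => m₀ x + ℓ y₀ x with hL
    have hLl : ∀ x, ((L x : ℝ) : 𝕋) = h (x + (y₀ + e)) - h x := by
      intro x
      rw [hL]
      simp only
      rw [AddCircle.coe_add, hm₀, coe_rho, hℓl, ← add_assoc]
      rw [sub_add_sub_cancel]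
    have hk := key (y₀ + e) L (hm₀c.add (hℓc y₀)) hLl x
    have hctx : ct x y₀ = ℓ y₀ x - ℓ y₀ 0 := rfl
    have : ct x (y₀ + e) - ct x y₀ = m₀ x - m₀ 0 := by
      rw [hk, hL, hctx]
      simp only
      ring
    rw [this]
    calc |m₀ x - m₀ 0| ≤ |m₀ x| + |m₀ 0| := abs_sub _ _
      _ ≤ 2 * ε' := by linarith [hm₀abs x, hm₀abs 0]
  have hctc : Continuous (fun p : Ω × Ω => ct p.1 p.2) := by
    rw [continuous_iff_continuousAt]
    intro p₀
    rw [ContinuousAt, Metric.tendsto_nhds]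
    intro ε hε
    set ε' : ℝ := min (ε/8) (1/4) with hε'
    have hε'pos : 0 < ε' := lt_min (by linarith) (by norm_num)
    have hε'half : ε' < 1/2 := lt_of_le_of_lt (min_le_right _ _) (by norm_num)
    obtain ⟨U, hUo, hU0, hUs⟩ := unif_small hh hε'pos
    have hO₂ : IsOpen {p : Ω × Ω | |ct p.1 p₀.2 - ct p₀.1 p₀.2| < ε/2} :=
      isOpen_lt (((ct_cont_x p₀.2).comp continuous_fst).sub continuous_const).abs continuous_const
    have hO₁ : IsOpen {p : Ω × Ω | p.2 - p₀.2 ∈ U} :=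
      hUo.preimage ((continuous_snd.sub continuous_const))
    have hmem₁ : p₀ ∈ {p : Ω × Ω | p.2 - p₀.2 ∈ U} := by
      simp only [mem_setOf_eq, sub_self]
      exact hU0
    have hmem₂ : p₀ ∈ {p : Ω × Ω | |ct p.1 p₀.2 - ct p₀.1 p₀.2| < ε/2} := by
      simp only [mem_setOf_eq, sub_self, abs_zero]
      linarith
    filter_upwards [hO₁.mem_nhds hmem₁, hO₂.mem_nhds hmem₂] with p hp₁ hp₂
    have hdecomp : p.2 = p₀.2 + (p.2 - p₀.2) := by abel
    have h1 : |ct p.1 p.2 - ct p.1 p₀.2| ≤ 2 * ε' := by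
      rw [hdecomp]
      exact aux hε'pos hε'half U hUs p₀.2 (p.2 - p₀.2) hp₁ p.1
    have h2 : |ct p.1 p₀.2 - ct p₀.1 p₀.2| < ε/2 := hp₂
    rw [Real.dist_eq]
    have hε'le : ε' ≤ ε/8 := min_le_left _ _
    calc |ct p.1 p.2 - ct p₀.1 p₀.2|
        ≤ |ct p.1 p.2 - ct p.1 p₀.2| + |ct p.1 p₀.2 - ct p₀.1 p₀.2| := abs_sub_le _ _ _
      _ < 2 * ε' + ε/2 := by linarith
      _ ≤ ε := by linarith
  -- exact cocycle identity
  have cocycle : ∀ x y z : Ω, ct x y + ct (x + y) z - ct x (y + z) - ct y z = 0 := by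
    have hEc : Continuous (fun p : Ω × Ω × Ω =>
        ct p.1 p.2.1 + ct (p.1 + p.2.1) p.2.2 - ct p.1 (p.2.1 + p.2.2) - ct p.2.1 p.2.2) := by
      have c1 : Continuous fun p : Ω × Ω × Ω => ct p.1 p.2.1 :=
        hctc.comp (continuous_fst.prodMk (continuous_fst.comp continuous_snd))
      have c2 : Continuous fun p : Ω × Ω × Ω => ct (p.1 + p.2.1) p.2.2 :=
        hctc.comp ((continuous_fst.add (continuous_fst.comp continuous_snd)).prodMk
          (continuous_snd.comp continuous_snd))
      have c3 : Continuous fun p : Ω × Ω × Ω => ct p.1 (p.2.1 + p.2.2) :=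
        hctc.comp (continuous_fst.prodMk ((continuous_fst.comp continuous_snd).add
          (continuous_snd.comp continuous_snd)))
      have c4 : Continuous fun p : Ω × Ω × Ω => ct p.2.1 p.2.2 :=
        hctc.comp ((continuous_fst.comp continuous_snd).prodMk
          (continuous_snd.comp continuous_snd))
      exact ((c1.add c2).sub c3).sub c4
    have hEi : ∀ p : Ω × Ω × Ω, ∃ k : ℤ,
        ct p.1 p.2.1 + ct (p.1 + p.2.1) p.2.2 - ct p.1 (p.2.1 + p.2.2) - ct p.2.1 p.2.2 = (k:ℝ) := by
      intro p
      apply coe_eq_zero_iff'.1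
      rw [AddCircle.coe_sub, AddCircle.coe_sub, AddCircle.coe_add,
        ct_lift, ct_lift, ct_lift, ct_lift, ← add_assoc]
      abel
    intro x y z
    have := intval_const hEc hEi (x, y, z) (0, 0, 0)
    simp only [ct_zero_left, add_zero, zero_add] at this
    rw [this]
    simp [ct_zero_left]
  -- Haar measure
  set K₀ : PositiveCompacts Ω := ⊤ with hK₀
  set lam : Measure Ω := Measure.addHaarMeasure K₀ with hlam
  haveI : IsProbabilityMeasure lam := by
    constructor
    rw [hlam, ← PositiveCompacts.coe_top (α := Ω)]
    exact Measure.addHaarMeasure_self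
  have hint : ∀ F : Ω → ℝ, Continuous F → Integrable F lam := by
    intro F hF
    have hc : HasCompactSupport F :=
      IsCompact.of_isClosed_subset isCompact_univ (isClosed_tsupport F) (subset_univ _)
    exact hF.integrable_of_hasCompactSupport hc
  set s' : Ω → ℝ := fun x => ∫ z, ct x z ∂lam with hs'
  -- quasimorphism property of s'
  have hs'hom : ∀ x y, s' (x + y) = s' x + s' y - ct x y := by
    intro x y
    have hpt : ∀ z, ct (x + y) z = ct x (y + z) + ct y z - ct x y := by
      intro z
      have := cocycle x y z
      linarith
    rw [hs']
    simp only
    rw [integral_congr_ae (Filter.Eventually.of_forall hpt)]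
    have i1 : Integrable (fun z => ct x (y + z)) lam :=
      hint (fun z => ct x (y + z))
        (by exact hctc.comp (continuous_const.prodMk (continuous_const.add continuous_id)))
    have i2 : Integrable (fun z => ct y z) lam :=
      hint (fun z => ct y z) (by exact hctc.comp (continuous_const.prodMk continuous_id))
    have i12 : Integrable (fun z => ct x (y + z) + ct y z) lam := i1.add i2
    have i3 : Integrable (fun _ : Ω => ct x y) lam := integrable_const _
    have e1 : ∫ z, (ct x (y + z) + ct y z - ct x y) ∂lam
        = (∫ z, (ct x (y + z) + ct y z) ∂lam) - ∫ _w : Ω, ct x y ∂lam := integral_sub i12 i3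
    have e2 : ∫ z, (ct x (y + z) + ct y z) ∂lam
        = (∫ z, ct x (y + z) ∂lam) + ∫ z, ct y z ∂lam := integral_add i1 i2
    have hinv : ∫ z, ct x (y + z) ∂lam = ∫ z, ct x z ∂lam :=
      integral_add_left_eq_self (μ := lam) (fun z => ct x z) y
    rw [e1, e2, hinv, integral_const]
    simp [measure_univ]
  -- continuity of s'
  have hs'c : Continuous s' := by
    rw [continuous_iff_continuousAt]
    intro x₀
    rw [ContinuousAt, Metric.tendsto_nhds]
    intro ε hε
    set O : Set (Ω × Ω) := {p | |ct p.1 p.2 - ct x₀ p.2| < ε/2} with hO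
    have hOo : IsOpen O :=
      isOpen_lt (hctc.sub (hctc.comp (continuous_const.prodMk continuous_snd))).abs
        continuous_const
    have hsub : ({x₀} : Set Ω) ×ˢ (univ : Set Ω) ⊆ O := by
      rintro ⟨a, z⟩ ⟨ha, -⟩
      have : a = x₀ := ha
      simp only [hO, mem_setOf_eq, this, sub_self, abs_zero]
      linarith
    obtain ⟨u, v, hu, hv, huu, hvv, huv⟩ :=
      generalized_tube_lemma isCompact_singleton isCompact_univ hOo hsub
    filter_upwards [hu.mem_nhds (huu rfl)] with x hx
    rw [Real.dist_eq]
    have hb : ∀ z : Ω, ‖ct x z - ct x₀ z‖ ≤ ε/2 := by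
      intro z
      have hmem : (x, z) ∈ u ×ˢ v := ⟨hx, hvv (mem_univ z)⟩
      have := huv hmem
      rw [Real.norm_eq_abs]
      exact this.le
    have heq : s' x - s' x₀ = ∫ z, (ct x z - ct x₀ z) ∂lam := by
      have e1 : ∫ z, (ct x z - ct x₀ z) ∂lam
          = (∫ z, ct x z ∂lam) - ∫ z, ct x₀ z ∂lam :=
        integral_sub
          (hint (fun z => ct x z) (by exact hctc.comp (continuous_const.prodMk continuous_id)))
          (hint (fun z => ct x₀ z) (by exact hctc.comp (continuous_const.prodMk continuous_id)))
      rw [e1]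
    have hle : ‖∫ z, (ct x z - ct x₀ z) ∂lam‖ ≤ (ε/2) * (lam univ).toReal :=
      norm_integral_le_of_norm_le_const (Filter.Eventually.of_forall hb)
    rw [← Real.norm_eq_abs, heq]
    have : (lam univ).toReal = 1 := by simp [measure_univ]
    rw [this, mul_one] at hle
    linarith
  -- the character
  set χ : Ω → 𝕋 := fun x => h x - h 0 + ((s' x : ℝ) : 𝕋) with hχ
  have hχadd : ∀ x y, χ (x + y) = χ x + χ y := by
    intro x y
    rw [hχ]
    simp only
    rw [hs'hom x y, AddCircle.coe_sub, AddCircle.coe_add, ct_lift]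
    abel
  have hχc : Continuous χ := (hh.sub continuous_const).add (continuous_coe.comp hs'c)
  refine ⟨χ, fun x => -(s' x), hχc, hs'c.neg, hχadd, fun x => ?_⟩
  rw [hχ]
  simp only
  rw [AddCircle.coe_neg]
  abel

end Brusch

section Sum

/-- Coercion `ℝ → 𝕋` commutes with finite sums. -/
lemma coe_sum {ι : Type*} (s : Finset ι) (F : ι → ℝ) :
    ((∑ i ∈ s, F i : ℝ) : 𝕋) = ∑ i ∈ s, ((F i : ℝ) : 𝕋) := by
  classical
  induction s using Finset.cons_induction with
  | empty => simp
  | cons a s ha ih => rw [Finset.sum_cons, Finset.sum_cons, AddCircle.coe_add, ih]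

end Sum

theorem stmt_0' {Ω : Type*} [TopologicalSpace Ω] [AddCommGroup Ω] [IsTopologicalAddGroup Ω]
    [CompactSpace Ω] [ConnectedSpace Ω] [T2Space Ω]
    [MeasurableSpace Ω] [BorelSpace Ω]
    (A : Ω ≃+ Ω) (hA : Continuous A) (hA' : Continuous A.symm)
    (b : Ω) (hb : b ∈ pathComponent (0 : Ω))
    (T : Equiv.Perm Ω) (hT : ∀ ω, T ω = A ω + b)
    (μ : Measure Ω) [IsProbabilityMeasure μ]
    (g : Susp T → AddCircle (1:ℝ)) (hg : Continuous g)
    (β : ℝ) (hβ : IsRotNum T μ g β) :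
    ∃ χ : Ω →+ AddCircle (1:ℝ), Continuous χ ∧ (∀ ω, χ (A ω) = χ ω) ∧
      ((β : ℝ) : AddCircle (1:ℝ)) = χ b := by
  classical
  -- basic objects
  set G : Ω × ℝ → 𝕋 := fun p => g (Quot.mk (suspRel T) p) with hG
  have hGc : Continuous G := hg.comp continuous_quot_mk
  have Gshift : ∀ (ω : Ω) (r : ℝ) (k : ℤ), G (ω, r + k) = G ((T ^ k) ω, r) := by
    intro ω r k
    apply congrArg g
    exact Quot.sound ⟨k, rfl, by push_cast; ring⟩
  set h : Ω → 𝕋 := fun ω => G (ω, 0) with hh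
  have hhc : Continuous h := hGc.comp (continuous_id.prodMk continuous_const)
  have hTc : Continuous (⇑T) := by
    have : ⇑T = fun ω => A ω + b := funext hT
    rw [this]
    exact hA.add continuous_const
  -- Bruschlinsky decomposition of h
  obtain ⟨χ₀, s, hχc, hsc, hχadd, hdec⟩ := bruschlinsky hhc
  -- the fiber transfer function f
  obtain ⟨δ, hδpos, hδ⟩ := exists_delta (Z := Ω) (fun ω r => G (ω, r))
    (by exact hGc) 0 1
  set m : ℕ := ⌈1/δ⌉₊ + 1 with hm
  have hm0 : (0:ℝ) < m := by positivity
  have hmδ : 1/(m:ℝ) ≤ δ := by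
    rw [div_le_iff₀ hm0]
    have h1 : 1/δ ≤ (⌈1/δ⌉₊ : ℝ) := Nat.le_ceil _
    have h2 : 1 ≤ δ * (⌈1/δ⌉₊ : ℝ) := by
      rw [← div_le_iff₀' hδpos]
      exact h1
    have h3 : δ * (m:ℝ) = δ * (⌈1/δ⌉₊ : ℝ) + δ := by rw [hm]; push_cast; ring
    linarith
  have hminv : 0 ≤ 1/(m:ℝ) := by positivity
  have hmm : (m:ℝ) * (1/(m:ℝ)) = 1 := by field_simp
  have hsm : ∀ (ω' : Ω) (k : ℕ), k < m →
      ∀ r ∈ Icc ((0:ℝ) + k*(1/(m:ℝ))) (0 + (k+1)*(1/(m:ℝ))),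
      ‖G (ω', r) - G (ω', 0 + k*(1/(m:ℝ)))‖ < 1/2 := by
    intro ω' k hk r hr
    have hkm : (k:ℝ) + 1 ≤ m := by exact_mod_cast hk
    have hk0 : (0:ℝ) ≤ k := k.cast_nonneg
    have hlo : (0:ℝ) ≤ 0 + k*(1/(m:ℝ)) := by positivity
    have hhi : (0:ℝ) + ((k:ℝ)+1)*(1/(m:ℝ)) ≤ 1 := by
      rw [zero_add]
      calc ((k:ℝ)+1)*(1/(m:ℝ)) ≤ (m:ℝ)*(1/(m:ℝ)) := mul_le_mul_of_nonneg_right hkm hminv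
        _ = 1 := hmm
    refine hδ ω' r (0 + k*(1/(m:ℝ))) ⟨le_trans hlo hr.1, le_trans hr.2 hhi⟩
      ⟨hlo, by linarith [mul_le_mul_of_nonneg_right hkm hminv]⟩ ?_
    rw [abs_le]
    constructor
    · have := hr.1
      have hdd : (0:ℝ) + ((k:ℝ)+1)*(1/(m:ℝ)) - (0 + k*(1/(m:ℝ))) = 1/(m:ℝ) := by ring
      nlinarith [hr.2]
    · have := hr.2
      nlinarith [hr.1]
  set f : Ω → ℝ := fun ω' => gridSum (fun r => G (ω', r)) 0 (1/(m:ℝ)) m 1 with hf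
  have hfl : ∀ ω', ((f ω' : ℝ) : 𝕋) = h (T ω') - h ω' := by
    intro ω'
    rw [hf]
    simp only
    rw [gridSum_lift (fun r => G (ω', r)) 0 (1/(m:ℝ)) hminv m 1]
    rw [zero_add, hmm, clamp_of_mem ⟨zero_le_one, le_rfl⟩]
    have h1 : G (ω', 1) = G (T ω', 0) := by
      have := Gshift ω' 0 (1:ℤ)
      simpa using this
    rw [h1, hh]
  have hfc : Continuous f := by
    rw [hf]
    show Continuous fun ω' => ∑ k ∈ Finset.range m,
      rho (G (ω', clamp 1 (0 + k*(1/(m:ℝ))) (0 + (k+1)*(1/(m:ℝ)))) - G (ω', 0 + k*(1/(m:ℝ))))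
    apply continuous_finset_sum
    intro k hk
    rw [Finset.mem_range] at hk
    have hmono : (0:ℝ) + k*(1/(m:ℝ)) ≤ 0 + (k+1)*(1/(m:ℝ)) := by
      have : (k:ℝ) ≤ (k:ℝ) + 1 := by linarith
      have := mul_le_mul_of_nonneg_right this hminv
      linarith
    have hin : Continuous (fun ω' : Ω =>
        G (ω', clamp 1 (0 + k*(1/(m:ℝ))) (0 + (k+1)*(1/(m:ℝ)))) - G (ω', 0 + k*(1/(m:ℝ)))) :=
      (hGc.comp (continuous_id.prodMk continuous_const)).sub
        (hGc.comp (continuous_id.prodMk continuous_const))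
    rw [continuous_iff_continuousAt]
    intro ω'
    have hcomp : ContinuousAt (rho ∘ (fun ω' : Ω =>
        G (ω', clamp 1 (0 + k*(1/(m:ℝ))) (0 + (k+1)*(1/(m:ℝ)))) - G (ω', 0 + k*(1/(m:ℝ))))) ω' :=
      ContinuousAt.comp (continuousAt_rho (hsm ω' k hk _ (clamp_mem hmono 1)))
        (hin.continuousAt (x := ω'))
    exact hcomp
  -- increment lemma: any lift of the orbit map gains exactly f over a unit of time
  have incr : ∀ (ω' : Ω) (v : ℝ → ℝ), Continuous v → (∀ r, ((v r : ℝ) : 𝕋) = G (ω', r)) →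
      v 1 - v 0 = f ω' := by
    intro ω' v hvc hvl
    set w : ℝ → ℝ := fun r => v 0 + gridSum (fun r => G (ω', r)) 0 (1/(m:ℝ)) m r with hw
    have hwc : Continuous w := continuous_const.add
      (gridSum_cont (fun r => G (ω', r)) 0 (1/(m:ℝ)) hminv m
        (hGc.comp (continuous_const.prodMk continuous_id)) (hsm ω'))
    have hFi : ∀ r ∈ Icc (0:ℝ) 1, ∃ k : ℤ, v r - w r = (k:ℝ) := by
      intro r hr
      apply coe_eq_zero_iff'.1
      rw [AddCircle.coe_sub, hvl, hw]
      simp only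
      rw [AddCircle.coe_add, gridSum_lift (fun r => G (ω', r)) 0 (1/(m:ℝ)) hminv m r,
        zero_add, hmm, clamp_of_mem hr, hvl]
      abel
    have h10 := intval_const_on (isPreconnected_Icc (a := (0:ℝ)) (b := 1)) (hvc.sub hwc) hFi
      (right_mem_Icc.2 zero_le_one) (left_mem_Icc.2 zero_le_one)
    have hw0 : w 0 = v 0 := by
      rw [hw]
      simp only
      rw [gridSum_zero_pt (fun r => G (ω', r)) m hminv le_rfl, add_zero]
    have hw1 : w 1 = v 0 + f ω' := by rw [hw]
    have : v 1 - w 1 = v 0 - w 0 := h10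
    rw [hw0, hw1] at this
    linarith
  -- the cocycle is a coboundary plus a constant
  set D : Ω → ℝ := fun ω' => f ω' + s ω' - s (T ω') with hD
  have hDc : Continuous D := (hfc.add hsc).sub (hsc.comp hTc)
  set ψ : Ω → 𝕋 := fun ω' => χ₀ (A ω') - χ₀ ω' with hψ
  have hψadd : ∀ x y, ψ (x + y) = ψ x + ψ y := by
    intro x y
    rw [hψ]
    simp only
    rw [map_add, hχadd, hχadd]
    abel
  have hDl : ∀ ω', ((D ω' : ℝ) : 𝕋) = ψ ω' + χ₀ b := by
    intro ω'
    rw [hD]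
    simp only
    rw [AddCircle.coe_sub, AddCircle.coe_add, hfl]
    have e1 : h (T ω') = χ₀ (T ω') + h 0 + ((s (T ω') : ℝ) : 𝕋) := hdec (T ω')
    have e2 : h ω' = χ₀ ω' + h 0 + ((s ω' : ℝ) : 𝕋) := hdec ω'
    have e3 : χ₀ (T ω') = χ₀ (A ω') + χ₀ b := by rw [hT ω', hχadd]
    rw [e1, e2, e3, hψ]
    abel_nf
    exact add_left_comm _ _ _
  obtain ⟨hψ0, hDconst⟩ := char_triv hψadd (χ₀ b) hDc hDl
  set c₀ : ℝ := D 0 with hc₀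
  have hκ : ((c₀ : ℝ) : 𝕋) = χ₀ b := by
    rw [hc₀, hDl 0, hψ0 0, zero_add]
  have hfd : ∀ ω', f ω' = c₀ - s ω' + s (T ω') := by
    intro ω'
    have := hDconst ω'
    rw [hD] at this
    simp only at this
    linarith
  -- pick a good point from the rotation-number hypothesis
  haveI hP1 : IsProbabilityMeasure (volume.restrict (Set.Ioc (0:ℝ) 1)) := by
    constructor
    rw [Measure.restrict_apply_univ]
    simp [Real.volume_Ioc]
  haveI hP2 : IsProbabilityMeasure (suspMeasure T μ) := by
    rw [suspMeasure]
    exact Measure.isProbabilityMeasure_map (measurable_quot_mk.aemeasurable)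
  have hne : suspMeasure T μ ≠ 0 := IsProbabilityMeasure.ne_zero _
  haveI : (MeasureTheory.ae (suspMeasure T μ)).NeBot := ae_neBot.2 hne
  obtain ⟨x, hx⟩ := hβ.exists
  obtain ⟨⟨ω, t⟩, rfl⟩ := Quot.exists_rep x
  -- lift of the orbit map
  obtain ⟨u, huc, hul⟩ := lift_real (fun r => G (ω, r))
    (hGc.comp (continuous_const.prodMk continuous_id))
  have hglift : ∀ r : ℝ, ((u (t + r) : ℝ) : 𝕋)
      = g (suspFlow T r (Quot.mk (suspRel T) (ω, t))) := by
    intro r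
    have : suspFlow T r (Quot.mk (suspRel T) (ω, t)) = Quot.mk (suspRel T) (ω, t + r) := rfl
    rw [this]
    show ((u (t + r) : ℝ) : 𝕋) = G (ω, t + r)
    exact hul (t + r)
  have hβlim : Tendsto (fun r : ℝ => u (t + r) / r) atTop (𝓝 β) :=
    hx (fun r => u (t + r)) (huc.comp (continuous_const.add continuous_id)) hglift
  -- limit along integers, first form
  have hnt : Tendsto (fun n : ℕ => ((n:ℝ) - t)) atTop atTop := by
    have h1 : Tendsto (fun n : ℕ => (n:ℝ)) atTop atTop := tendsto_natCast_atTop_atTop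
    exact tendsto_atTop_add_const_right atTop (-t) h1 |>.congr (fun n => by ring)
  have hβlim2 : Tendsto (fun n : ℕ => u n / ((n:ℝ) - t)) atTop (𝓝 β) := by
    have := hβlim.comp hnt
    refine this.congr (fun n => ?_)
    simp only [Function.comp_apply]
    rw [add_sub_cancel]
  -- Birkhoff-type telescoping formula for u at the integers
  have hustep : ∀ n : ℕ, u ((n:ℝ) + 1) = u n + f ((T ^ n) ω) := by
    intro n
    have hv : ∀ r : ℝ, ((u ((n:ℝ) + r) : ℝ) : 𝕋) = G ((T ^ n) ω, r) := by
      intro r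
      rw [hul ((n:ℝ) + r)]
      have : (n:ℝ) + r = r + ((n:ℤ):ℝ) := by push_cast; ring
      rw [this, Gshift ω r (n:ℤ), zpow_natCast]
    have := incr ((T ^ n) ω) (fun r => u ((n:ℝ) + r))
      (huc.comp (continuous_const.add continuous_id)) hv
    simp only [add_zero] at this
    linarith
  have husum : ∀ n : ℕ, u n = u 0 + n * c₀ - s ω + s ((T ^ n) ω) := by
    intro n
    induction n with
    | zero => simp
    | succ n ih =>
        have h1 := hustep n
        rw [hfd ((T ^ n) ω)] at h1
        have h2 : (T ^ (n+1)) ω = T ((T ^ n) ω) := by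
          rw [pow_succ']
          rfl
        have h3 : u ((n:ℝ) + 1) = u ((n+1 : ℕ) : ℝ) := by norm_num
        rw [h3] at h1
        rw [h1, ih, h2]
        push_cast
        ring
  -- conclude β = c₀
  obtain ⟨xs, -, hxs⟩ := isCompact_univ.exists_isMaxOn (univ_nonempty (α := Ω))
    hsc.abs.continuousOn
  set C : ℝ := |u 0| + |s ω| + |s xs| + |c₀ * t| with hC
  have hc₀lim : Tendsto (fun n : ℕ => u n / ((n:ℝ) - t)) atTop (𝓝 c₀) := by
    have hz : Tendsto (fun n : ℕ => u n / ((n:ℝ) - t) - c₀) atTop (𝓝 0) := by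
      have hbnd : ∀ᶠ n : ℕ in atTop,
          ‖u n / ((n:ℝ) - t) - c₀‖ ≤ C * ((n:ℝ) - t)⁻¹ := by
        filter_upwards [hnt.eventually_ge_atTop 1] with n hn
        have hpos : (0:ℝ) < (n:ℝ) - t := by linarith
        have heqn : u n / ((n:ℝ) - t) - c₀
            = (u 0 - s ω + s ((T ^ n) ω) + c₀ * t) / ((n:ℝ) - t) := by
          rw [husum n]
          field_simp
          ring
        rw [heqn, Real.norm_eq_abs, abs_div, abs_of_pos hpos, div_eq_mul_inv]
        apply mul_le_mul_of_nonneg_right _ (inv_nonneg.2 hpos.le)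
        have hb1 : |s ((T ^ n) ω)| ≤ |s xs| := hxs (mem_univ _)
        calc |u 0 - s ω + s ((T ^ n) ω) + c₀ * t|
            ≤ |u 0| + |s ω| + |s ((T ^ n) ω)| + |c₀ * t| := by
              have h1 := abs_add_le (u 0 - s ω + s ((T ^ n) ω)) (c₀ * t)
              have h2 := abs_add_le (u 0 - s ω) (s ((T ^ n) ω))
              have h3 := abs_sub (u 0) (s ω)
              linarith
          _ ≤ C := by rw [hC]; linarith
      refine squeeze_zero_norm' hbnd ?_
      have h1 := hnt.inv_tendsto_atTop
      have h2 := h1.const_mul C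
      simpa using h2
    have := hz.add (tendsto_const_nhds (x := c₀))
    simpa using this
  have hβc : β = c₀ := tendsto_nhds_unique hβlim2 hc₀lim
  -- package the character
  refine ⟨AddMonoidHom.mk' χ₀ (fun x y => hχadd x y), hχc, fun ω' => ?_, ?_⟩
  · have := hψ0 ω'
    rw [hψ] at this
    simp only at this
    exact sub_eq_zero.1 this
  · rw [hβc]
    exact hκ

end RotNumAux

/-- every a.e. rotation number of a continuous map on the suspension of an ergodic
affine automorphism `T_{A,b}` (with `b` in the path component of the identity of a compact
connected abelian group) lies in `π⁻¹(χ b)` for some `A`-invariant character `χ`. -/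
theorem stmt_0 {Ω : Type*} [TopologicalSpace Ω] [AddCommGroup Ω] [IsTopologicalAddGroup Ω]
    [CompactSpace Ω] [ConnectedSpace Ω] [T2Space Ω]
    [MeasurableSpace Ω] [BorelSpace Ω]
    (A : Ω ≃+ Ω) (hA : Continuous A) (hA' : Continuous A.symm)
    (b : Ω) (hb : b ∈ pathComponent (0 : Ω))
    (T : Equiv.Perm Ω) (hT : ∀ ω, T ω = A ω + b)
    (μ : Measure Ω) [IsProbabilityMeasure μ] (hErg : Ergodic (T : Ω → Ω) μ)
    (g : Susp T → AddCircle (1:ℝ)) (hg : Continuous g)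
    (β : ℝ) (hβ : IsRotNum T μ g β) :
    ∃ χ : Ω →+ AddCircle (1:ℝ), Continuous χ ∧ (∀ ω, χ (A ω) = χ ω) ∧
      ((β : ℝ) : AddCircle (1:ℝ)) = χ b := by
  exact RotNumAux.stmt_0' A hA hA' b hb T hT μ g hg β hβ

end
end

section
/- Let Ω be a compact connected abelian topological group, A: Ω → Ω a continuous group automorphism, b ∈ Ω, T = T_{A,b}: ω ↦ Aω + b, and μ a T-ergodic Borel probability measure on Ω. For every continuous character χ: Ω → ℝ/ℤ with χ∘A = χ and every β ∈ ℝ with π(β) = χ(b), there exists a continuous map g: X → ℝ/ℤ on the suspension X of (Ω,T) whose ν-a.e. rotation number is β; in particular one may take g([ω,t]) = χ(ω) + π(βt). -/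
open MeasureTheory Filter Topology

noncomputable section

lemma int_ne_half (m : ℤ) : (m : ℝ) ≠ 1/2 ∧ (m : ℝ) ≠ -(1/2) := by
  constructor <;> intro h
  · have : ((2*m : ℤ) : ℝ) = ((1:ℤ):ℝ) := by push_cast; linarith
    have := Int.cast_injective this; omega
  · have : ((2*m : ℤ) : ℝ) = ((-1:ℤ):ℝ) := by push_cast; linarith
    have := Int.cast_injective this; omega

/-- A continuous real function with values in ℤ (as multiples of 1) vanishing somewhere
is identically that value. -/
lemma const_of_int_valued {q : ℝ → ℝ} (hc : Continuous q) (h0 : q 0 = 0)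
    (hZ : ∀ s, ∃ n : ℤ, q s = n) : ∀ s, q s = 0 := by
  intro s
  obtain ⟨n, hn⟩ := hZ s
  rcases eq_or_ne n 0 with h | h
  · rw [hn, h, Int.cast_zero]
  set c : ℝ := if 0 < n then 1/2 else -(1/2) with hc'
  have hmem : c ∈ Set.uIcc (q 0) (q s) := by
    rw [h0, hn, Set.mem_uIcc]
    rcases lt_or_ge 0 n with hp | hp
    · left
      have : (1:ℝ) ≤ (n:ℝ) := by exact_mod_cast hp
      simp only [hc', if_pos hp]; constructor <;> linarith
    · right
      have hn1 : n ≤ -1 := by omega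
      have : (n:ℝ) ≤ -1 := by exact_mod_cast hn1
      have hnp : ¬ (0 < n) := by omega
      simp only [hc', if_neg hnp]; constructor <;> linarith
  obtain ⟨s', _, hs'⟩ := intermediate_value_uIcc hc.continuousOn hmem
  obtain ⟨m, hm⟩ := hZ s'
  rcases (int_ne_half m) with ⟨h1, h2⟩
  rw [hs'] at hm
  rcases lt_or_ge 0 n with hp | hp
  · exact absurd hm.symm (by simpa [hc', if_pos hp] using h1)
  · have hnp : ¬ (0 < n) := by omega
    exact absurd hm.symm (by simpa [hc', if_neg hnp] using h2)

/-- for every `A`-invariant character `χ` and every `β ∈ π⁻¹(χ b)`, there is a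
continuous map on the suspension of `(Ω, T_{A,b})` whose ν-a.e. rotation number is `β`;
one may take `g([ω,t]) = χ(ω) + π(β t)`. -/
theorem stmt_1 {Ω : Type*} [TopologicalSpace Ω] [AddCommGroup Ω] [IsTopologicalAddGroup Ω]
    [CompactSpace Ω] [ConnectedSpace Ω] [T2Space Ω]
    [MeasurableSpace Ω] [BorelSpace Ω]
    (A : Ω ≃+ Ω) (hA : Continuous A) (hA' : Continuous A.symm)
    (b : Ω)
    (T : Equiv.Perm Ω) (hT : ∀ ω, T ω = A ω + b)
    (μ : Measure Ω) [IsProbabilityMeasure μ] (hErg : Ergodic (T : Ω → Ω) μ)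
    (χ : Ω →+ AddCircle (1:ℝ)) (hχ : Continuous χ) (hχA : ∀ ω, χ (A ω) = χ ω)
    (β : ℝ) (hβ : ((β : ℝ) : AddCircle (1:ℝ)) = χ b) :
    ∃ g : Susp T → AddCircle (1:ℝ), Continuous g ∧ IsRotNum T μ g β ∧
      ∀ p : Ω × ℝ, g (Quot.mk (suspRel T) p) = χ p.1 + ((β * p.2 : ℝ) : AddCircle (1:ℝ)) := by
  -- the basic function on Ω × ℝ
  set f : Ω × ℝ → AddCircle (1:ℝ) := fun p => χ p.1 + ((β * p.2 : ℝ) : AddCircle (1:ℝ)) with hf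
  -- χ of an iterate
  have hχT : ∀ ω, χ (T ω) = χ ω + ((β:ℝ) : AddCircle (1:ℝ)) := by
    intro ω; rw [hT, map_add, hχA, hβ]
  have hχTz : ∀ (n : ℤ) (ω : Ω), χ ((T ^ n) ω) = χ ω + n • ((β:ℝ) : AddCircle (1:ℝ)) := by
    intro n
    induction n using Int.induction_on with
    | zero => intro ω; simp
    | succ k ih =>
        intro ω
        have : (T ^ ((k:ℤ) + 1)) ω = T ((T ^ (k:ℤ)) ω) := by
          rw [add_comm, zpow_add, zpow_one, Equiv.Perm.mul_apply]
        rw [this, hχT, ih, add_zsmul, one_zsmul, add_assoc]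
    | pred k ih =>
        intro ω
        have h1 : (T ^ (-(k:ℤ) - 1)) ω = T⁻¹ ((T ^ (-(k:ℤ))) ω) := by
          rw [show -(k:ℤ) - 1 = -1 + -(k:ℤ) by ring, zpow_add, zpow_neg_one,
            Equiv.Perm.mul_apply]
        have h2 : ∀ ω', χ (T⁻¹ ω') = χ ω' - ((β:ℝ) : AddCircle (1:ℝ)) := by
          intro ω'
          have := hχT (T⁻¹ ω')
          rw [← Equiv.Perm.mul_apply, mul_inv_cancel, Equiv.Perm.one_apply] at this
          rw [this]; abel
        rw [h1, h2, ih]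
        rw [sub_zsmul, one_zsmul]
        abel
  have hcoeβ : ∀ n : ℤ, (n • ((β:ℝ) : AddCircle (1:ℝ))) = (((n : ℝ) * β : ℝ) : AddCircle (1:ℝ)) := by
    intro n
    rw [← QuotientAddGroup.mk_zsmul, zsmul_eq_mul]
  -- invariance of f under the relation
  have hinv : ∀ p q, suspRel T p q → f p = f q := by
    rintro p q ⟨n, h1, h2⟩
    simp only [hf, h1, h2, hχTz]
    rw [hcoeβ]
    have : β * (p.2 - (n:ℝ)) = β * p.2 - (n:ℝ) * β := by ring
    rw [this, QuotientAddGroup.mk_sub]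
    abel
  refine ⟨Quot.lift f hinv, ?_, ?_, fun p => rfl⟩
  · exact continuous_quot_lift hinv
      (((hχ.comp continuous_fst)).add
        ((AddCircle.continuous_mk' 1).comp (continuous_const.mul continuous_snd)))
  · apply Filter.Eventually.of_forall
    intro x g' hg'c hg'
    obtain ⟨p, rfl⟩ := Quot.exists_rep x
    have hflow : ∀ s : ℝ, Quot.lift f hinv (suspFlow T s (Quot.mk (suspRel T) p))
        = χ p.1 + ((β * (p.2 + s) : ℝ) : AddCircle (1:ℝ)) := fun s => rfl
    -- q s := g' s - g' 0 - β * s is integer valued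
    set q : ℝ → ℝ := fun s => g' s - g' 0 - β * s with hq
    have hqZ : ∀ s, ∃ n : ℤ, q s = n := by
      intro s
      have h1 : ((q s : ℝ) : AddCircle (1:ℝ)) = 0 := by
        have e1 := hg' s
        have e0 := hg' 0
        rw [hflow] at e1 e0
        simp only [hq]
        rw [sub_eq_add_neg, sub_eq_add_neg, QuotientAddGroup.mk_add, QuotientAddGroup.mk_add,
          QuotientAddGroup.mk_neg, QuotientAddGroup.mk_neg, e1, e0]
        have : β * (p.2 + s) = β * (p.2 + 0) + β * s := by ring
        rw [this, QuotientAddGroup.mk_add]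
        abel
      obtain ⟨n, hn⟩ := (AddCircle.coe_eq_zero_iff _).mp h1
      exact ⟨n, by rw [← hn, zsmul_eq_mul, mul_one]⟩
    have hq0 : q 0 = 0 := by simp [hq]
    have hqc : Continuous q := (hg'c.sub continuous_const).sub (continuous_const.mul continuous_id)
    have hqz : ∀ s, q s = 0 := const_of_int_valued hqc hq0 hqZ
    have hform : ∀ s, g' s = g' 0 + β * s := by
      intro s; have := hqz s; simp only [hq] at this; linarith
    have hend : Tendsto (fun s : ℝ => g' 0 * s⁻¹ + β) atTop (𝓝 β) := by
      have := (tendsto_inv_atTop_zero (𝕜 := ℝ)).const_mul (g' 0)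
      simpa using this.add_const β
    refine hend.congr' ?_
    filter_upwards [eventually_gt_atTop (0:ℝ)] with s hs
    rw [hform s]
    field_simp

end
end

section
/- Let Ω be a nonempty finite set with the discrete topology, T: Ω → Ω a bijection, and μ a T-ergodic Borel probability measure on Ω with support of cardinality p. Then the set of ν-a.e. rotation numbers of continuous maps from the suspension X of (Ω,T) to ℝ/ℤ equals (1/p)ℤ: every ν-a.e. rotation number lies in (1/p)ℤ, and every element of (1/p)ℤ arises as the ν-a.e. rotation number of some continuous map X → ℝ/ℤ. -/
open MeasureTheory Filter Topology Set
noncomputable section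
namespace Stmt16Helper

lemma coe_eq_coe_iff {x y : ℝ} : ((x : AddCircle (1:ℝ)) = (y : AddCircle (1:ℝ))) ↔ ∃ k : ℤ, x - y = k := by
  rw [QuotientAddGroup.eq_iff_sub_mem, AddSubgroup.mem_zmultiples_iff]
  constructor
  · rintro ⟨k, hk⟩; exact ⟨k, by simpa using hk.symm⟩
  · rintro ⟨k, hk⟩; exact ⟨k, by simpa using hk.symm⟩

lemma const_of_forall_int {u : ℝ → ℝ} (hu : Continuous u)
    (h : ∀ s, ∃ k : ℤ, u s = k) : ∀ s, u s = u 0 := by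
  intro s
  by_contra hne
  obtain ⟨a, ha⟩ := h 0
  obtain ⟨b, hb⟩ := h s
  have hab : a ≠ b := by
    rintro rfl; exact hne (by rw [hb, ha])
  have key : ∀ v : ℝ, v ∈ Set.uIcc (u 0) (u s) → ∃ c, u c = v := by
    intro v hv
    obtain ⟨c, _, hc⟩ := intermediate_value_uIcc hu.continuousOn hv
    exact ⟨c, hc⟩
  have contr : ∀ (a : ℤ) (c : ℝ), u c = (a:ℝ) + 1/2 → False := by
    intro a c hc
    obtain ⟨k, hk⟩ := h c
    rw [hk] at hc
    have h2 : (2*k : ℤ) = 2*a + 1 := by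
      have : (2*(k:ℝ)) = 2*(a:ℝ) + 1 := by linarith
      exact_mod_cast this
    omega
  rcases hab.lt_or_gt with hlt | hlt
  · have h1 : ((a:ℝ)+1) ≤ (b:ℝ) := by exact_mod_cast hlt
    obtain ⟨c, hc⟩ := key ((a:ℝ) + 1/2) (by
      rw [Set.mem_uIcc]; left; constructor <;> [rw [ha]; rw [hb]] <;> linarith)
    exact contr a c hc
  · have h1 : ((b:ℝ)+1) ≤ (a:ℝ) := by exact_mod_cast hlt
    obtain ⟨c, hc⟩ := key ((b:ℝ) + 1/2) (by
      rw [Set.mem_uIcc]; right; constructor <;> [rw [hb]; rw [ha]] <;> linarith)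
    exact contr b c hc

def Small (x : AddCircle (1:ℝ)) : Prop := ∃ r ∈ Set.Ioo (-(4⁻¹):ℝ) 4⁻¹, (r : AddCircle (1:ℝ)) = x

section rho
local instance f1 : Fact ((0:ℝ) < 1) := ⟨one_pos⟩

/-- representative in [-1/2, 1/2) -/
def rho (x : AddCircle (1:ℝ)) : ℝ := ((AddCircle.equivIco 1 (-(2⁻¹)) x : Set.Ico _ _) : ℝ)

lemma rho_coe {r : ℝ} (hr : r ∈ Set.Ico (-(2⁻¹):ℝ) (2⁻¹)) : rho (r : AddCircle (1:ℝ)) = r := by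
  unfold rho
  rw [AddCircle.equivIco, QuotientAddGroup.equivIcoMod_coe]
  refine (toIcoMod_eq_self _).mpr ⟨hr.1, ?_⟩
  have : (-(2⁻¹:ℝ) + 1) = 2⁻¹ := by norm_num
  rw [this]; exact hr.2

lemma coe_rho (x : AddCircle (1:ℝ)) : ((rho x : ℝ) : AddCircle (1:ℝ)) = x := by
  unfold rho
  exact (AddCircle.equivIco 1 (-(2⁻¹))).symm_apply_apply x

lemma rho_zero : rho 0 = 0 := by
  have : ((0:ℝ) : AddCircle (1:ℝ)) = 0 := by simp
  rw [← this, rho_coe] ; norm_num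

lemma rho_small_ne {r : ℝ} (hr : r ∈ Set.Ioo (-(4⁻¹):ℝ) 4⁻¹) :
    (r : AddCircle (1:ℝ)) ≠ ((-(2⁻¹) : ℝ) : AddCircle (1:ℝ)) := by
  intro h
  obtain ⟨k, hk⟩ := coe_eq_coe_iff.mp h
  obtain ⟨hr1, hr2⟩ := hr
  have h0 : (0:ℝ) < k := by push_cast [← hk]; linarith
  have h1 : (k:ℝ) < 1 := by push_cast [← hk]; linarith
  have h0' : 0 < k := by exact_mod_cast h0
  have h1' : k < 1 := by exact_mod_cast h1
  omega

lemma rho_continuousAt {x : AddCircle (1:ℝ)} (hx : Small x) : ContinuousAt rho x := by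
  obtain ⟨r, hr, rfl⟩ := hx
  exact continuous_subtype_val.continuousAt.comp
    (AddCircle.continuousAt_equivIco 1 _ (rho_small_ne hr))

lemma rho_add {x y : AddCircle (1:ℝ)} (hx : Small x) (hy : Small y) :
    rho (x + y) = rho x + rho y := by
  obtain ⟨r, hr, rfl⟩ := hx
  obtain ⟨s, hs, rfl⟩ := hy
  have hco : ((r : AddCircle (1:ℝ)) + s) = ((r + s : ℝ) : AddCircle (1:ℝ)) := by norm_cast
  simp only [Set.mem_Ioo] at hr hs
  have h1 : r ∈ Set.Ico (-(2⁻¹):ℝ) 2⁻¹ := ⟨by linarith [hr.1], by linarith [hr.2]⟩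
  have h2 : s ∈ Set.Ico (-(2⁻¹):ℝ) 2⁻¹ := ⟨by linarith [hs.1], by linarith [hs.2]⟩
  have h3 : (r + s) ∈ Set.Ico (-(2⁻¹):ℝ) 2⁻¹ := ⟨by linarith, by linarith⟩
  rw [hco, rho_coe h3, rho_coe h1, rho_coe h2]

lemma small_zero : Small 0 := ⟨0, by norm_num, by norm_cast⟩

lemma exists_delta {per : ℝ} (hper : 0 < per) {G : ℝ → AddCircle (1:ℝ)}
    (hG : Continuous G) (hp : ∀ s, G (s + per) = G s) :
    ∃ δ > 0, ∀ a b : ℝ, |a - b| ≤ δ → Small (G a - G b) := by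
  have hU : IsOpen {x : AddCircle (1:ℝ) | Small x} := by
    have himg : {x : AddCircle (1:ℝ) | Small x}
        = (fun r : ℝ => (r : AddCircle (1:ℝ))) '' Set.Ioo (-(4⁻¹)) 4⁻¹ := by
      ext x
      exact ⟨fun ⟨r, hr, h⟩ => ⟨r, hr, h⟩, fun ⟨r, hr, h⟩ => ⟨r, hr, h⟩⟩
    rw [himg]
    exact QuotientAddGroup.isOpenMap_coe _ isOpen_Ioo
  set Φ : ℝ × ℝ → AddCircle (1:ℝ) := fun z => G z.1 - G z.2 with hΦ
  have hΦc : Continuous Φ := (hG.comp continuous_fst).sub (hG.comp continuous_snd)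
  have hV : IsOpen (Φ ⁻¹' {x | Small x}) := hU.preimage hΦc
  have hD : IsCompact ((fun b : ℝ => (b, b)) '' Set.Icc 0 per) :=
    isCompact_Icc.image (continuous_id.prodMk continuous_id)
  have hDV : ((fun b : ℝ => (b, b)) '' Set.Icc 0 per) ⊆ Φ ⁻¹' {x | Small x} := by
    rintro _ ⟨b, -, rfl⟩
    show Small (G b - G b)
    simpa using small_zero
  obtain ⟨δ, hδ0, hδth⟩ := hD.exists_thickening_subset_open hV hDV
  refine ⟨δ/2, by linarith, ?_⟩
  intro a b hab
  set n : ℤ := ⌊b / per⌋ with hn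
  have hper' : Function.Periodic G per := hp
  have h1 : G (a - n * per) = G a := hper'.sub_int_mul_eq n
  have h2 : G (b - n * per) = G b := hper'.sub_int_mul_eq n
  have hbmem : b - n * per ∈ Set.Icc 0 per :=
    ⟨Int.sub_floor_div_mul_nonneg b hper, (Int.sub_floor_div_mul_lt b hper).le⟩
  have hmem : ((a - n * per, b - n * per) : ℝ × ℝ) ∈ Metric.thickening δ
      ((fun b : ℝ => (b, b)) '' Set.Icc 0 per) := by
    rw [Metric.mem_thickening_iff]
    refine ⟨(b - n * per, b - n * per), Set.mem_image_of_mem _ hbmem, ?_⟩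
    rw [Prod.dist_eq]
    simp only [dist_self]
    rw [Real.dist_eq]
    have : a - n * per - (b - n * per) = a - b := by ring
    rw [this]
    have h3 : (0:ℝ) < δ := hδ0
    refine max_lt (by linarith [abs_nonneg (a-b)]) (by linarith)
  have := hδth hmem
  have hΦval : Φ (a - n * per, b - n * per) = G a - G b := by
    simp only [hΦ]; rw [h1, h2]
  rw [Set.mem_preimage, hΦval] at this
  exact this

section Lsum
variable {G : ℝ → AddCircle (1:ℝ)}

/-- partial lift sums -/
def Lsum (G : ℝ → AddCircle (1:ℝ)) (M : ℕ) (t : ℝ) : ℝ :=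
  ∑ i ∈ Finset.range M, rho (G ((i+1) * (t/M)) - G (i * (t/M)))

lemma coe_Lsum (M : ℕ) (hM : 1 ≤ M) (t : ℝ) :
    ((Lsum G M t : ℝ) : AddCircle (1:ℝ)) = G t - G 0 := by
  have hcast : ((Lsum G M t : ℝ) : AddCircle (1:ℝ))
      = ∑ i ∈ Finset.range M, ((rho (G ((i+1) * (t/M)) - G (i * (t/M))) : ℝ) : AddCircle (1:ℝ)) :=
    map_sum (QuotientAddGroup.mk' _) _ _
  rw [hcast]
  have : ∀ i ∈ Finset.range M,
      ((rho (G ((i+1) * (t/M)) - G (i * (t/M))) : ℝ) : AddCircle (1:ℝ))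
      = G ((i+1) * (t/M)) - G (i * (t/M)) := fun i _ => coe_rho _
  rw [Finset.sum_congr rfl this]
  have htel : ∑ i ∈ Finset.range M,
      (G ((i+1) * (t/M)) - G (i * (t/M)))
      = (fun i : ℕ => G (i * (t/M))) M - (fun i : ℕ => G (i * (t/M))) 0 := by
    rw [← Finset.sum_range_sub (fun i : ℕ => G (i * (t/M))) M]
    refine Finset.sum_congr rfl fun i _ => ?_
    push_cast
    try ring_nf
  rw [htel]
  have hM0 : (M:ℝ) ≠ 0 := by positivity
  have h1 : (M:ℝ) * (t/M) = t := by field_simp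
  have h2 : ((0:ℕ):ℝ) * (t/M) = 0 := by norm_num
  simp only [h1, h2]

lemma rho_telescope {δ : ℝ} (hδ : ∀ a b : ℝ, |a - b| ≤ δ → Small (G a - G b)) :
    ∀ (k : ℕ) (a h : ℝ), |h| ≤ δ → (k:ℝ) * |h| ≤ δ →
    rho (G (a + k*h) - G a) = ∑ j ∈ Finset.range k, rho (G (a + (j+1)*h) - G (a + j*h)) := by
  intro k
  induction k with
  | zero =>
      intro a h _ _
      simp [rho_zero]
  | succ k ih =>
      intro a h h1 h2
      have hk1 : (k:ℝ) * |h| ≤ δ := by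
        have : (k:ℝ) * |h| ≤ ((k:ℝ)+1) * |h| := by nlinarith [abs_nonneg h]
        push_cast at h2; linarith
      have hx : Small (G (a + ((k:ℝ)+1)*h) - G (a + (k:ℝ)*h)) := by
        apply hδ
        have : a + ((k:ℝ)+1)*h - (a + (k:ℝ)*h) = h := by ring
        rw [this]; exact h1
      have hy : Small (G (a + (k:ℝ)*h) - G a) := by
        apply hδ
        have : a + (k:ℝ)*h - a = (k:ℝ)*h := by ring
        rw [this, abs_mul, abs_of_nonneg (by positivity : (0:ℝ) ≤ (k:ℝ))]
        exact hk1
      have hsplit : G (a + ((k:ℕ)+1:ℕ)*h) - G a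
          = (G (a + ((k:ℝ)+1)*h) - G (a + (k:ℝ)*h)) + (G (a + (k:ℝ)*h) - G a) := by
        push_cast
        rw [sub_add_sub_cancel]
      rw [hsplit, rho_add hx hy, Finset.sum_range_succ]
      rw [ih a h h1 hk1]
      push_cast
      try ring

lemma sum_grouped (f : ℕ → ℝ) (M K : ℕ) :
    ∑ x ∈ Finset.range (M*K), f x = ∑ i ∈ Finset.range M, ∑ j ∈ Finset.range K, f (i*K + j) := by
  induction M with
  | zero => simp
  | succ M ih =>
      rw [Finset.sum_range_succ, ← ih, Nat.succ_mul, Finset.sum_range_add]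

lemma Lsum_mul {δ : ℝ}
    (hδ : ∀ a b : ℝ, |a - b| ≤ δ → Small (G a - G b))
    (M K : ℕ) (hM : 1 ≤ M) (hK : 1 ≤ K) (t : ℝ) (ht : |t| ≤ δ * M) :
    Lsum G (M*K) t = Lsum G M t := by
  have hM0 : (0:ℝ) < M := by exact_mod_cast hM
  have hK0 : (0:ℝ) < K := by exact_mod_cast hK
  set h' : ℝ := t / ((M:ℝ) * K) with hh'
  have hcast : (((M*K : ℕ)):ℝ) = (M:ℝ) * K := by push_cast; ring
  have hstep : |h'| ≤ δ := by
    rw [hh', abs_div, abs_of_pos (by positivity : (0:ℝ) < (M:ℝ)*K), div_le_iff₀ (by positivity)]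
    calc |t| ≤ δ * M := ht
    _ ≤ δ * ((M:ℝ) * K) := by
      have hK1' : (1:ℝ) ≤ (K:ℝ) := by exact_mod_cast hK
      nlinarith [abs_nonneg t, ht]
  have hKh : (K:ℝ) * |h'| = |t| / M := by
    rw [hh', abs_div, abs_of_pos (by positivity : (0:ℝ) < (M:ℝ)*K)]
    field_simp
  have hKstep : (K:ℝ) * |h'| ≤ δ := by
    rw [hKh, div_le_iff₀ hM0]; linarith
  have htm : (t / (M:ℝ)) = (K:ℝ) * h' := by rw [hh']; field_simp
  have key : ∀ i : ℕ,
      rho (G (((i:ℝ)+1) * (t/(M:ℝ))) - G ((i:ℝ) * (t/(M:ℝ))))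
      = ∑ j ∈ Finset.range K,
          rho (G ((((i*K+j : ℕ):ℝ)+1) * h') - G (((i*K+j : ℕ):ℝ) * h')) := by
    intro i
    have happ := rho_telescope hδ K ((i:ℝ) * (t/(M:ℝ))) h' hstep hKstep
    have e1 : ((i:ℝ)+1) * (t/(M:ℝ)) = (i:ℝ) * (t/(M:ℝ)) + (K:ℝ)*h' := by
      rw [htm]; ring
    rw [e1, happ]
    refine Finset.sum_congr rfl fun j _ => ?_
    have e2 : (i:ℝ) * (t/(M:ℝ)) + ((j:ℝ)+1)*h' = (((i*K+j : ℕ):ℝ)+1) * h' := by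
      push_cast
      rw [htm]; ring
    have e3 : (i:ℝ) * (t/(M:ℝ)) + (j:ℝ)*h' = ((i*K+j : ℕ):ℝ) * h' := by
      push_cast
      rw [htm]; ring
    rw [e2, e3]
  have hL : Lsum G (M*K) t = ∑ x ∈ Finset.range (M*K), rho (G (((x:ℝ)+1) * h') - G ((x:ℝ) * h')) := by
    unfold Lsum
    refine Finset.sum_congr rfl fun x _ => ?_
    rw [hh', hcast]
  rw [hL, sum_grouped (fun x : ℕ => rho (G (((x:ℝ)+1) * h') - G ((x:ℝ) * h'))) M K]
  unfold Lsum
  exact Finset.sum_congr rfl fun i _ => (key i).symm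

lemma Lsum_eq {δ : ℝ}
    (hδ : ∀ a b : ℝ, |a - b| ≤ δ → Small (G a - G b))
    (M M' : ℕ) (hM : 1 ≤ M) (hM' : 1 ≤ M') (t : ℝ)
    (ht : |t| ≤ δ * M) (ht' : |t| ≤ δ * M') :
    Lsum G M t = Lsum G M' t := by
  have h1 := Lsum_mul hδ M M' hM hM' t ht
  have h2 := Lsum_mul hδ M' M hM' hM t ht'
  rw [Nat.mul_comm M' M] at h2
  rw [← h1, h2]

lemma Lsum_continuousAt (hG : Continuous G) {δ : ℝ}
    (hδ : ∀ a b : ℝ, |a - b| ≤ δ → Small (G a - G b))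
    (K : ℕ) (hK : 1 ≤ K) {t₀ : ℝ} (ht : |t₀| ≤ δ * K) :
    ContinuousAt (Lsum G K) t₀ := by
  have hK0 : (0:ℝ) < K := by exact_mod_cast hK
  unfold Lsum
  apply tendsto_finset_sum
  intro i _
  have hinner : Continuous (fun t : ℝ => G (((i:ℝ)+1) * (t/(K:ℝ))) - G ((i:ℝ) * (t/(K:ℝ)))) := by
    apply Continuous.sub <;> exact hG.comp (by continuity)
  have hsmall : Small (G (((i:ℝ)+1) * (t₀/(K:ℝ))) - G ((i:ℝ) * (t₀/(K:ℝ)))) := by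
    apply hδ
    have : ((i:ℝ)+1) * (t₀/(K:ℝ)) - (i:ℝ) * (t₀/(K:ℝ)) = t₀/(K:ℝ) := by ring
    rw [this, abs_div, abs_of_pos hK0, div_le_iff₀ hK0]
    calc |t₀| ≤ δ * K := ht
    _ = δ * K := rfl
  have hcomp := ContinuousAt.comp (x := t₀) (rho_continuousAt hsmall) hinner.continuousAt
  exact hcomp

lemma exists_lift {per : ℝ} (hper : 0 < per) {G : ℝ → AddCircle (1:ℝ)}
    (hG : Continuous G) (hp : ∀ s, G (s + per) = G s) :
    ∃ g' : ℝ → ℝ, Continuous g' ∧ ∀ t, ((g' t : ℝ) : AddCircle (1:ℝ)) = G t := by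
  obtain ⟨δ, hδ0, hδ⟩ := exists_delta hper hG hp
  obtain ⟨c₀, hc₀I, hc₀⟩ := AddCircle.eq_coe_Ico (G 0)
  set Mf : ℝ → ℕ := fun t => ⌈|t|/δ⌉₊ + 1 with hMf
  have hMf1 : ∀ t, 1 ≤ Mf t := fun t => Nat.le_add_left 1 _
  have hMfle : ∀ t, |t| ≤ δ * Mf t := by
    intro t
    have h1 : |t|/δ ≤ (⌈|t|/δ⌉₊ : ℝ) := Nat.le_ceil _
    have h2 : (⌈|t|/δ⌉₊ : ℝ) ≤ (Mf t : ℝ) := by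
      rw [hMf]; push_cast; linarith
    rw [← div_le_iff₀' hδ0]
    linarith
  refine ⟨fun t => c₀ + Lsum G (Mf t) t, ?_, ?_⟩
  · rw [continuous_iff_continuousAt]
    intro t₀
    set K : ℕ := ⌈(|t₀|+1)/δ⌉₊ + 1 with hKdef
    have hK1 : 1 ≤ K := Nat.le_add_left 1 _
    have hKbig : |t₀| + 1 ≤ δ * K := by
      have h1 : (|t₀|+1)/δ ≤ (⌈(|t₀|+1)/δ⌉₊ : ℝ) := Nat.le_ceil _
      have h2 : (⌈(|t₀|+1)/δ⌉₊ : ℝ) ≤ (K : ℝ) := by rw [hKdef]; push_cast; linarith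
      rw [← div_le_iff₀' hδ0]
      linarith
    have heq : (fun t => c₀ + Lsum G (Mf t) t) =ᶠ[𝓝 t₀] (fun t => c₀ + Lsum G K t) := by
      filter_upwards [Metric.ball_mem_nhds t₀ one_pos] with t htball
      rw [Metric.mem_ball, Real.dist_eq] at htball
      have htle : |t| ≤ |t₀| + 1 := by
        have := abs_sub_abs_le_abs_sub t t₀
        linarith
      have h3 : |t| ≤ δ * K := le_trans htle hKbig
      rw [Lsum_eq hδ (Mf t) K (hMf1 t) hK1 t (hMfle t) h3]
    have hcK : ContinuousAt (fun t => c₀ + Lsum G K t) t₀ :=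
      (continuousAt_const).add (Lsum_continuousAt hG hδ K hK1
        (le_trans (by linarith [abs_nonneg t₀] : |t₀| ≤ |t₀|+1) hKbig))
    exact hcK.congr heq.symm
  · intro t
    have h1 : ((c₀ + Lsum G (Mf t) t : ℝ) : AddCircle (1:ℝ))
        = (c₀ : AddCircle (1:ℝ)) + ((Lsum G (Mf t) t : ℝ) : AddCircle (1:ℝ)) :=
      map_add (QuotientAddGroup.mk' _) _ _
    rw [h1, coe_Lsum (Mf t) (hMf1 t) t, hc₀]
    abel

end Lsum
end rho

lemma tendsto_affine (c C : ℝ) : Tendsto (fun s : ℝ => (c*s + C)/s) atTop (𝓝 c) := by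
  have h : (fun s : ℝ => (c*s + C)/s) =ᶠ[atTop] fun s => c + C/s := by
    filter_upwards [eventually_gt_atTop 0] with s hs
    field_simp
  rw [tendsto_congr' h]
  have h2 : Tendsto (fun s : ℝ => C/s) atTop (𝓝 0) := tendsto_const_nhds.div_atTop tendsto_id
  simpa using (tendsto_const_nhds (x := c) (f := atTop)).add h2

lemma tendsto_div_of_step {g' : ℝ → ℝ} (hg : Continuous g') {per : ℝ} (hper : 0 < per)
    (κ : ℝ) (hstep : ∀ s, g' (s + per) = g' s + κ) :
    Tendsto (fun t => g' t / t) atTop (𝓝 (κ / per)) := by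
  have hiter : ∀ n : ℕ, ∀ s, g' (s + n * per) = g' s + n * κ := by
    intro n
    induction n with
    | zero => intro s; simp
    | succ n ih =>
        intro s
        push_cast
        have h1 : s + ((n:ℝ)+1) * per = (s + per) + (n:ℝ) * per := by ring
        rw [h1, ih (s+per), hstep s]
        ring
  obtain ⟨C, hC⟩ :=
    (isCompact_Icc (a := (0:ℝ)) (b := per)).exists_bound_of_continuousOn hg.continuousOn
  have key : ∀ t : ℝ, 0 ≤ t → |g' t - (κ/per) * t| ≤ C + |κ/per| * per := by
    intro t ht
    set n : ℕ := ⌊t/per⌋₊ with hn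
    set r : ℝ := t - n * per with hr
    have hdiv0 : 0 ≤ t/per := div_nonneg ht hper.le
    have h1 : (n:ℝ) ≤ t/per := Nat.floor_le hdiv0
    have h1' : (n:ℝ) * per ≤ t := (le_div_iff₀ hper).mp h1
    have h0r : 0 ≤ r := by rw [hr]; linarith
    have h2 : t/per < (n:ℝ)+1 := Nat.lt_floor_add_one _
    have h2' : t < ((n:ℝ)+1) * per := (div_lt_iff₀ hper).mp h2
    have hrp : r ≤ per := by rw [hr]; nlinarith
    have hteq : t = r + n * per := by rw [hr]; ring
    have ht' : g' t = g' r + n * κ := by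
      rw [hteq] at *
      exact hiter n r
    have hb := hC r ⟨h0r, hrp⟩
    rw [Real.norm_eq_abs] at hb
    have hcκ : (κ/per) * ((n:ℝ) * per) = (n:ℝ) * κ := by field_simp
    have hsub : g' t - (κ/per)*t = g' r - (κ/per)*r := by
      rw [ht', hteq, mul_add, hcκ]; ring
    rw [hsub]
    have habs : |g' r - (κ/per)*r| ≤ |g' r| + |(κ/per)*r| := by
      have := abs_add_le (g' r) (-((κ/per)*r))
      simpa [sub_eq_add_neg, abs_neg] using this
    have hrineq : |(κ/per) * r| ≤ |κ/per| * per := by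
      rw [abs_mul]
      have hra : |r| ≤ per := by rw [abs_of_nonneg h0r]; exact hrp
      nlinarith [abs_nonneg (κ/per)]
    linarith
  have hsq : Tendsto (fun t => g' t / t - κ/per) atTop (𝓝 0) := by
    have hb0 : Tendsto (fun t : ℝ => (C + |κ/per| * per)/t) atTop (𝓝 0) :=
      tendsto_const_nhds.div_atTop tendsto_id
    refine squeeze_zero_norm' ?_ hb0
    filter_upwards [eventually_ge_atTop 1] with t ht1
    have ht0 : (0:ℝ) < t := lt_of_lt_of_le one_pos ht1
    have heq2 : g' t / t - κ/per = (g' t - (κ/per)*t)/t := by field_simp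
    rw [Real.norm_eq_abs, heq2, abs_div, abs_of_pos ht0]
    gcongr
    exact key t ht0.le
  have hfin : (fun t : ℝ => g' t / t) = fun t => (g' t / t - κ/per) + κ/per := by
    funext t; ring
  rw [hfin]
  simpa using hsq.add (tendsto_const_nhds (x := κ/per) (f := atTop))

end Stmt16Helper

open MeasureTheory Filter Topology

noncomputable section

/-- for an ergodic bijection `T` of a finite set `Ω` whose ergodic measure `μ`
has support of cardinality `p`, the set of ν-a.e. rotation numbers of continuous maps on the
suspension of `(Ω,T)` equals `(1/p)ℤ`. -/
theorem stmt_16 {Ω : Type*} [Fintype Ω] [Nonempty Ω]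
    [TopologicalSpace Ω] [DiscreteTopology Ω]
    [MeasurableSpace Ω] [MeasurableSingletonClass Ω]
    (T : Equiv.Perm Ω)
    (μ : Measure Ω) [IsProbabilityMeasure μ] (hErg : Ergodic (T : Ω → Ω) μ)
    (p : ℕ) (hp : Nat.card {ω : Ω // 0 < μ {ω}} = p) :
    (∀ g : Susp T → AddCircle (1:ℝ), Continuous g → ∀ β : ℝ,
      IsRotNum T μ g β → ∃ m : ℤ, β = m / p) ∧
    (∀ m : ℤ, ∃ g : Susp T → AddCircle (1:ℝ), Continuous g ∧
      IsRotNum T μ g (m / p)) := by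
  classical
  have hmeas : ∀ s : Set Ω, MeasurableSet s := fun s => s.to_countable.measurableSet
  set S : Set Ω := {ω | 0 < μ {ω}} with hSdef
  have hSc : μ Sᶜ = 0 := by
    have hrw : Sᶜ = ⋃ ω ∈ Sᶜ, ({ω} : Set Ω) := (Set.biUnion_of_singleton Sᶜ).symm
    rw [hrw, measure_biUnion_null_iff (Set.to_countable _)]
    intro ω hω
    have h1 : ¬ 0 < μ {ω} := hω
    simpa using le_antisymm (not_lt.mp h1) zero_le
  have hS1 : μ S = 1 := by
    have h2 := measure_add_measure_compl (μ := μ) (hmeas S)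
    rw [hSc, add_zero] at h2; rw [h2]; exact measure_univ
  have hSne : ∃ ω₀, ω₀ ∈ S := by
    by_contra h
    push_neg at h
    have h3 : S = ∅ := Set.eq_empty_iff_forall_notMem.mpr h
    rw [h3] at hS1; simp at hS1
  obtain ⟨ω₀, hω₀⟩ := hSne
  -- invariance of point masses
  have hmass1 : ∀ ω, μ {T ω} = μ {ω} := by
    intro ω
    have hpre : (⇑T) ⁻¹' ({T ω} : Set Ω) = {ω} := by
      ext y; simp [T.injective.eq_iff]
    have h4 := hErg.toMeasurePreserving.measure_preimage
      (hmeas ({T ω} : Set Ω)).nullMeasurableSet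
    rw [hpre] at h4; exact h4.symm
  have hmassn : ∀ n : ℕ, ∀ ω, μ {(T^n : Equiv.Perm Ω) ω} = μ {ω} := by
    intro n
    induction n with
    | zero => intro ω; simp
    | succ n ih =>
        intro ω
        have h5 : (T^(n+1) : Equiv.Perm Ω) ω = T ((T^n : Equiv.Perm Ω) ω) := by
          rw [pow_succ']; rfl
        rw [h5, hmass1, ih]
  have hmassz : ∀ n : ℤ, ∀ ω, μ {(T^n : Equiv.Perm Ω) ω} = μ {ω} := by
    intro n ω
    obtain ⟨m, hm | hm⟩ := Int.eq_nat_or_neg n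
    · subst hm; rw [zpow_natCast]; exact hmassn m ω
    · subst hm
      have h1 := hmassn m ((T^(-(m:ℤ)) : Equiv.Perm Ω) ω)
      have h2 : (T^(m:ℕ) : Equiv.Perm Ω) ((T^(-(m:ℤ)) : Equiv.Perm Ω) ω) = ω := by
        have h6 : ((T^(m:ℕ) : Equiv.Perm Ω) * (T^(-(m:ℤ)) : Equiv.Perm Ω)) = 1 := by
          rw [← zpow_natCast T m, ← zpow_add]; simp
        calc (T^(m:ℕ) : Equiv.Perm Ω) ((T^(-(m:ℤ)) : Equiv.Perm Ω) ω)
            = ((T^(m:ℕ) : Equiv.Perm Ω) * (T^(-(m:ℤ)) : Equiv.Perm Ω)) ω := rfl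
          _ = ω := by rw [h6]; rfl
      rw [h2] at h1; exact h1.symm
  -- the orbit map
  set e : ℤ → Ω := fun n => (T^n : Equiv.Perm Ω) ω₀ with he
  have he_add : ∀ a b : ℤ, e (a + b) = (T^a : Equiv.Perm Ω) (e b) := by
    intro a b
    show (T^(a+b) : Equiv.Perm Ω) ω₀ = (T^a : Equiv.Perm Ω) ((T^b : Equiv.Perm Ω) ω₀)
    rw [zpow_add]; rfl
  have he0 : e 0 = ω₀ := by show (T^(0:ℤ) : Equiv.Perm Ω) ω₀ = ω₀; simp
  -- existence of a positive period
  have hex : ∃ n : ℕ, 0 < n ∧ e n = ω₀ := by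
    have hgen : ∀ a b : ℕ, a < b → e a = e b → ∃ n : ℕ, 0 < n ∧ e n = ω₀ := by
      intro a b hab heq
      refine ⟨b - a, by omega, ?_⟩
      have hcast : ((b - a : ℕ) : ℤ) = -(a:ℤ) + b := by
        push_cast [Nat.cast_sub hab.le]; ring
      rw [hcast, he_add, ← heq]
      have h7 : (T^(-(a:ℤ)) : Equiv.Perm Ω) (e a) = e (-(a:ℤ) + a) := (he_add _ _).symm
      rw [h7]; simp [he0]
    obtain ⟨a, b, hab, heq⟩ := Finite.exists_ne_map_eq_of_infinite (fun n : ℕ => e n)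
    rcases hab.lt_or_gt with h | h
    · exact hgen a b h heq
    · exact hgen b a h heq.symm
  set q : ℕ := Nat.find hex with hqdef
  obtain ⟨hq0, hqfix⟩ : 0 < q ∧ e q = ω₀ := Nat.find_spec hex
  have hqmin : ∀ k, k < q → ¬(0 < k ∧ e k = ω₀) := fun k hk => Nat.find_min hex hk
  have hfixq : ∀ k : ℤ, e ((q:ℤ) * k) = ω₀ := by
    intro k
    have hfx : Function.IsFixedPt (⇑(T^((q:ℤ)) : Equiv.Perm Ω)) ω₀ := by
      show (T^((q:ℤ)) : Equiv.Perm Ω) ω₀ = ω₀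
      have : e ((q:ℕ):ℤ) = ω₀ := hqfix
      exact this
    have h8 := hfx.perm_zpow k
    show (T^((q:ℤ)*k) : Equiv.Perm Ω) ω₀ = ω₀
    rw [zpow_mul]
    exact h8
  have he_per : ∀ n k : ℤ, e (n + (q:ℤ) * k) = e n := by
    intro n k
    rw [he_add n ((q:ℤ)*k), hfixq k]
  have he_mod : ∀ n : ℤ, e n = e (n % (q:ℤ)) := by
    intro n
    conv_lhs => rw [show n = n % (q:ℤ) + (q:ℤ) * (n / (q:ℤ)) by
      rw [add_comm]; exact (Int.mul_ediv_add_emod n (q:ℤ)).symm]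
    rw [he_per]
  have hkey : ∀ a b : ℤ, e a = e b ↔ (q:ℤ) ∣ (a - b) := by
    intro a b
    constructor
    · intro h
      have h1 : e (a - b) = ω₀ := by
        have h9 := congrArg (⇑(T^(-b) : Equiv.Perm Ω)) h
        rw [← he_add (-b) a, ← he_add (-b) b] at h9
        rw [show -b + b = 0 by ring, he0] at h9
        rw [show a - b = -b + a by ring]
        exact h9
      set r := (a - b) % (q:ℤ) with hrdef
      have hq0' : (q:ℤ) ≠ 0 := by exact_mod_cast hq0.ne'
      have hr0 : 0 ≤ r := Int.emod_nonneg _ hq0'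
      have hrq : r < (q:ℤ) := Int.emod_lt_of_pos _ (by exact_mod_cast hq0)
      have hre : e r = ω₀ := by rw [hrdef, ← he_mod]; exact h1
      by_cases hr : r = 0
      · rw [hrdef] at hr; exact Int.dvd_of_emod_eq_zero hr
      · exfalso
        have hrpos : 0 < r := lt_of_le_of_ne hr0 (Ne.symm hr)
        have h2 : r.toNat < q := by omega
        apply hqmin r.toNat h2
        refine ⟨by omega, ?_⟩
        show e ((r.toNat : ℕ) : ℤ) = ω₀
        rw [Int.toNat_of_nonneg hr0]
        exact hre
    · rintro ⟨k, hk⟩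
      have h10 : a = b + (q:ℤ) * k := by rw [← hk]; ring
      rw [h10, he_per]
  set O : Set Ω := Set.range e with hOdef
  have hOS : O ⊆ S := by
    rintro x ⟨n, rfl⟩
    show 0 < μ {e n}
    have : μ {e n} = μ {ω₀} := hmassz n ω₀
    rw [this]; exact hω₀
  have hSinvO : ∀ n : ℤ, ∀ x, x ∈ O → (T^n : Equiv.Perm Ω) x ∈ O := by
    rintro n x ⟨mm, rfl⟩
    exact ⟨n + mm, (he_add n mm)⟩
  have hinv : (⇑T) ⁻¹' O = O := by
    ext x
    constructor
    · rintro ⟨n, hn⟩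
      refine ⟨-1 + n, ?_⟩
      have h1 : e (-1 + n) = (T^(-1:ℤ) : Equiv.Perm Ω) (e n) := he_add _ _
      rw [hn] at h1
      rw [h1, zpow_neg_one]
      exact T.symm_apply_apply x
    · rintro ⟨n, rfl⟩
      show T (e n) ∈ O
      refine ⟨1 + n, ?_⟩
      rw [he_add 1 n, zpow_one]
  have hOc : μ Oᶜ = 0 := by
    rcases hErg.toPreErgodic.measure_self_or_compl_eq_zero (hmeas O) hinv with h | h
    · exfalso
      have h11 : μ {ω₀} ≤ μ O := measure_mono (Set.singleton_subset_iff.mpr ⟨0, he0⟩)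
      rw [h] at h11
      have := le_antisymm h11 zero_le
      exact absurd this hω₀.ne'
    · exact h
  have hSO : S = O := by
    apply Set.Subset.antisymm _ hOS
    intro ω hω
    by_contra hno
    have h12 : μ {ω} ≤ μ Oᶜ := measure_mono (Set.singleton_subset_iff.mpr hno)
    rw [hOc] at h12
    exact absurd (le_antisymm h12 zero_le) hω.ne'
  -- cardinality of the support is q
  have hcard : Nat.card {ω : Ω // 0 < μ {ω}} = q := by
    have hmem : ∀ j : Fin q, 0 < μ {e (j:ℤ)} := fun j => hOS ⟨(j:ℤ), rfl⟩
    have hbij : Function.Bijective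
        (fun j : Fin q => (⟨e (j:ℤ), hmem j⟩ : {ω : Ω // 0 < μ {ω}})) := by
      constructor
      · intro a b hab
        have h13 : e ((a:ℤ)) = e ((b:ℤ)) := congrArg Subtype.val hab
        obtain ⟨k, hk⟩ := (hkey _ _).mp h13
        have ha : ((a:ℤ)) < q := by exact_mod_cast a.2
        have hb : ((b:ℤ)) < q := by exact_mod_cast b.2
        have ha0 : 0 ≤ ((a:ℤ)) := by positivity
        have hb0 : 0 ≤ ((b:ℤ)) := by positivity
        have : (a:ℤ) - b = 0 := by
          refine Int.eq_zero_of_abs_lt_dvd ⟨k, hk⟩ ?_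
          rw [abs_sub_lt_iff]; omega
        have : (a:ℤ) = b := by omega
        exact Fin.ext (by exact_mod_cast this)
      · rintro ⟨x, hx⟩
        have hxO : x ∈ O := by rw [← hSO]; exact hx
        obtain ⟨n, hn⟩ := hxO
        have hq0' : (q:ℤ) ≠ 0 := by exact_mod_cast hq0.ne'
        have hr0 : 0 ≤ n % (q:ℤ) := Int.emod_nonneg _ hq0'
        have hrq : n % (q:ℤ) < (q:ℤ) := Int.emod_lt_of_pos _ (by exact_mod_cast hq0)
        refine ⟨⟨(n % (q:ℤ)).toNat, by omega⟩, ?_⟩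
        apply Subtype.ext
        show e (((n % (q:ℤ)).toNat : ℕ) : ℤ) = x
        rw [Int.toNat_of_nonneg hr0, ← he_mod, hn]
    exact Nat.card_eq_of_equiv_fin (Equiv.ofBijective _ hbij).symm
  have hpq : p = q := by rw [← hp, hcard]
  have hp0 : 0 < p := by omega
  have hpR : (0:ℝ) < (p:ℝ) := by exact_mod_cast hp0
  have hTpS : ∀ ω, ω ∈ S → (T^((p:ℤ)) : Equiv.Perm Ω) ω = ω := by
    intro ω hω
    have hωO : ω ∈ O := by rw [← hSO]; exact hω
    obtain ⟨n, rfl⟩ := hωO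
    have h14 : (T^((q:ℤ)) : Equiv.Perm Ω) (e n) = e ((q:ℤ) + n) := (he_add _ _).symm
    have h15 : e ((q:ℤ) + n) = e n := by
      rw [show (q:ℤ) + n = n + (q:ℤ) * 1 by ring, he_per]
    rw [hpq]
    rw [h14, h15]
  -- the index function
  set idx : Ω → ℤ := fun ω => if h : ∃ n : ℤ, e n = ω then h.choose else 0 with hidxdef
  have hidx : ∀ ω, ω ∈ S → e (idx ω) = ω := by
    intro ω hω
    have hex2 : ∃ n : ℤ, e n = ω := by
      have : ω ∈ O := by rw [← hSO]; exact hω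
      exact this
    have hieq : idx ω = hex2.choose := by
      simp only [hidxdef]
      rw [dif_pos hex2]
    rw [hieq]
    exact hex2.choose_spec
  have hidx_rel : ∀ ω, ω ∈ S → ∀ n : ℤ, ∃ k : ℤ,
      (idx ((T^n : Equiv.Perm Ω) ω) : ℤ) - (idx ω + n) = (q:ℤ) * k := by
    intro ω hω n
    have hω' : (T^n : Equiv.Perm Ω) ω ∈ S := by
      rw [hSO]
      exact hSinvO n ω (by rw [← hSO]; exact hω)
    have h2 : e (idx ((T^n : Equiv.Perm Ω) ω)) = (T^n : Equiv.Perm Ω) ω := hidx _ hω'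
    have h3 : e (n + idx ω) = (T^n : Equiv.Perm Ω) ω := by rw [he_add, hidx ω hω]
    obtain ⟨k, hk⟩ := (hkey _ _).mp (h2.trans h3.symm)
    exact ⟨k, by rw [← hk]; ring⟩
  -- membership transport
  have hSmem : ∀ (n : ℤ) ω, ω ∈ S → (T^n : Equiv.Perm Ω) ω ∈ S := by
    intro n ω hω
    rw [hSO]; exact hSinvO n ω (by rw [← hSO]; exact hω)
  have hSmem' : ∀ (n : ℤ) ω, ω ∉ S → (T^n : Equiv.Perm Ω) ω ∉ S := by
    intro n ω hω hmem
    apply hω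
    have h16 := hSmem (-n) _ hmem
    have h17 : (T^(-n) : Equiv.Perm Ω) ((T^n : Equiv.Perm Ω) ω) = ω := by
      have : ((T^(-n) : Equiv.Perm Ω) * (T^n : Equiv.Perm Ω)) = 1 := by
        rw [← zpow_add]; simp
      calc (T^(-n) : Equiv.Perm Ω) ((T^n : Equiv.Perm Ω) ω)
          = ((T^(-n) : Equiv.Perm Ω) * (T^n : Equiv.Perm Ω)) ω := rfl
        _ = ω := by rw [this]; rfl
    rwa [h17] at h16
  -- flow equations
  have hflow : ∀ (ω : Ω) (t s : ℝ),
      suspFlow T s (Quot.mk (suspRel T) (ω, t)) = Quot.mk (suspRel T) (ω, t + s) :=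
    fun ω t s => rfl
  have hper_flow : ∀ ω, ω ∈ S → ∀ u : ℝ,
      Quot.mk (suspRel T) (ω, u + (p:ℝ)) = Quot.mk (suspRel T) (ω, u) := by
    intro ω hω u
    apply Quot.sound
    refine ⟨(p:ℤ), (hTpS ω hω).symm, ?_⟩
    push_cast; ring
  haveI hprob1 : IsProbabilityMeasure (volume.restrict (Set.Ioc (0:ℝ) 1)) := by
    constructor
    rw [Measure.restrict_apply_univ]
    simp [Real.volume_Ioc]
  constructor
  · -- Direction 1
    intro g hg β hβ
    have hae1 := ae_of_ae_map (measurable_quot_mk.aemeasurable) hβ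
    have haeS : ∀ᵐ z ∂(μ.prod (volume.restrict (Set.Ioc (0:ℝ) 1))), z.1 ∈ S := by
      rw [ae_iff]
      have hset : {z : Ω × ℝ | ¬ z.1 ∈ S} = Sᶜ ×ˢ (Set.univ : Set ℝ) := by
        ext z; simp [Set.mem_prod]
      rw [hset, Measure.prod_prod, hSc, zero_mul]
    have hcomb := haeS.and hae1
    have hne : (μ.prod (volume.restrict (Set.Ioc (0:ℝ) 1))) ≠ 0 :=
      IsProbabilityMeasure.ne_zero _
    haveI := ae_neBot.mpr hne
    obtain ⟨⟨ω, t⟩, hzS, hzP⟩ := hcomb.exists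
    set x := Quot.mk (suspRel T) (ω, t) with hxdef
    set G : ℝ → AddCircle (1:ℝ) := fun s => g (suspFlow T s x) with hGdef
    have hGc : Continuous G := by
      have h18 : Continuous (fun s : ℝ => Quot.mk (suspRel T) (ω, t + s)) :=
        continuous_quot_mk.comp (continuous_const.prodMk (continuous_const.add continuous_id))
      have h19 : (fun s : ℝ => g (suspFlow T s x)) =
          (fun s : ℝ => g (Quot.mk (suspRel T) (ω, t + s))) := by
        funext s; rw [hxdef, hflow]
      rw [hGdef, h19]
      exact hg.comp h18
    have hGper : ∀ s, G (s + (p:ℝ)) = G s := by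
      intro s
      show g (suspFlow T (s + (p:ℝ)) x) = g (suspFlow T s x)
      rw [hxdef, hflow, hflow]
      congr 1
      rw [show t + (s + (p:ℝ)) = (t + s) + (p:ℝ) by ring]
      exact hper_flow ω hzS (t + s)
    obtain ⟨g', hg'c, hg'⟩ := Stmt16Helper.exists_lift hpR hGc hGper
    have hβlim := hzP g' hg'c hg'
    have hint : ∀ s, ∃ k : ℤ, (fun s => g' (s + (p:ℝ)) - g' s) s = k := by
      intro s
      apply Stmt16Helper.coe_eq_coe_iff.mp
      rw [hg', hg', hGper]
    have huc : Continuous (fun s => g' (s + (p:ℝ)) - g' s) :=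
      (hg'c.comp (continuous_id.add continuous_const)).sub hg'c
    have hconst := Stmt16Helper.const_of_forall_int huc hint
    obtain ⟨k, hk⟩ := hint 0
    simp only at hk
    have hstep : ∀ s, g' (s + (p:ℝ)) = g' s + (k:ℝ) := by
      intro s
      have h20 := hconst s
      rw [hk] at h20
      linarith
    have hlim2 := Stmt16Helper.tendsto_div_of_step hg'c hpR (k:ℝ) hstep
    exact ⟨k, tendsto_nhds_unique hβlim hlim2⟩
  · -- Direction 2
    intro m
    set c : Ω → ℝ := fun ω => if ω ∈ S then (m:ℝ)/(p:ℝ) else 0 with hcdef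
    set d : Ω → ℝ := fun ω => if ω ∈ S then (m:ℝ)*((idx ω : ℤ):ℝ)/(p:ℝ) else 0 with hddef
    set F : Ω × ℝ → AddCircle (1:ℝ) :=
      fun z => ((c z.1 * z.2 + d z.1 : ℝ) : AddCircle (1:ℝ)) with hFdef
    have hqpR : ((q:ℤ):ℝ) = (p:ℝ) := by exact_mod_cast hpq.symm
    have hFinv : ∀ z w, suspRel T z w → F z = F w := by
      rintro ⟨ω, t⟩ ⟨ω', t'⟩ ⟨n, h1, h2⟩
      simp only at h1 h2
      subst h1
      subst h2
      by_cases hω : ω ∈ S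
      · have hω' : (T^n : Equiv.Perm Ω) ω ∈ S := hSmem n ω hω
        show ((c ω * t + d ω : ℝ) : AddCircle (1:ℝ))
            = ((c ((T^n : Equiv.Perm Ω) ω) * (t - (n:ℝ)) + d ((T^n : Equiv.Perm Ω) ω) : ℝ)
              : AddCircle (1:ℝ))
        rw [Stmt16Helper.coe_eq_coe_iff]
        obtain ⟨k, hk⟩ := hidx_rel ω hω n
        refine ⟨-(m * k), ?_⟩
        have hkr : ((idx ((T^n : Equiv.Perm Ω) ω) : ℤ):ℝ)
            = ((idx ω : ℤ):ℝ) + (n:ℝ) + ((q:ℤ):ℝ)*((k:ℤ):ℝ) := by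
          have := congrArg (fun z : ℤ => (z:ℝ)) hk
          push_cast at this ⊢
          linarith
        simp only [hcdef, hddef, if_pos hω, if_pos hω']
        rw [hkr, hqpR]
        push_cast
        field_simp
        ring
      · have hω' : (T^n : Equiv.Perm Ω) ω ∉ S := hSmem' n ω hω
        show ((c ω * t + d ω : ℝ) : AddCircle (1:ℝ))
            = ((c ((T^n : Equiv.Perm Ω) ω) * (t - (n:ℝ)) + d ((T^n : Equiv.Perm Ω) ω) : ℝ)
              : AddCircle (1:ℝ))
        simp only [hcdef, hddef, if_neg hω, if_neg hω']
        norm_num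
    set g : Susp T → AddCircle (1:ℝ) := Quot.lift F hFinv with hgdef
    have hgc : Continuous g := by
      apply continuous_quot_lift
      have hcc : Continuous c := continuous_of_discreteTopology
      have hdc : Continuous d := continuous_of_discreteTopology
      show Continuous fun z : Ω × ℝ => ((c z.1 * z.2 + d z.1 : ℝ) : AddCircle (1:ℝ))
      exact (AddCircle.continuous_mk' (1:ℝ)).comp
        (((hcc.comp continuous_fst).mul continuous_snd).add (hdc.comp continuous_fst))
    refine ⟨g, hgc, ?_⟩
    -- the rotation number property
    have hequiv : Equivalence (suspRel T) := by
      constructor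
      · intro z
        exact ⟨0, by simp, by simp⟩
      · rintro z w ⟨n, h1, h2⟩
        refine ⟨-n, ?_, by rw [h2]; push_cast; ring⟩
        rw [h1]
        have : ((T^(-n) : Equiv.Perm Ω) * (T^n : Equiv.Perm Ω)) = 1 := by
          rw [← zpow_add]; simp
        calc z.1 = ((T^(-n) : Equiv.Perm Ω) * (T^n : Equiv.Perm Ω)) z.1 := by rw [this]; rfl
          _ = (T^(-n) : Equiv.Perm Ω) ((T^n : Equiv.Perm Ω) z.1) := rfl
      · rintro z w v ⟨a, ha1, ha2⟩ ⟨b, hb1, hb2⟩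
        refine ⟨b + a, ?_, by rw [hb2, ha2]; push_cast; ring⟩
        rw [hb1, ha1, zpow_add]
        rfl
    set A : Set (Susp T) := Quot.mk (suspRel T) '' (S ×ˢ (Set.univ : Set ℝ)) with hAdef
    have hA1 : Quot.mk (suspRel T) ⁻¹' A = S ×ˢ (Set.univ : Set ℝ) := by
      apply Set.Subset.antisymm
      · rintro ⟨ω, t⟩ hz
        obtain ⟨w, hwS, hw⟩ := hz
        have hrel : suspRel T w (ω, t) := hequiv.eqvGen_iff.mp (Quot.eq.mp hw)
        obtain ⟨n, h1, h2⟩ := hrel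
        refine ⟨?_, trivial⟩
        show ω ∈ S
        have : ω = (T^n : Equiv.Perm Ω) w.1 := h1
        rw [this]
        exact hSmem n _ hwS.1
      · exact Set.subset_preimage_image _ _
    have hAmeas : MeasurableSet A := by
      show MeasurableSet[MeasurableSpace.map (Quot.mk (suspRel T)) _] A
      rw [MeasurableSpace.map_def]
      rw [hA1]
      exact (hmeas S).prod MeasurableSet.univ
    have hν : suspMeasure T μ Aᶜ = 0 := by
      rw [suspMeasure, Measure.map_apply measurable_quot_mk hAmeas.compl,
        Set.preimage_compl, hA1]
      have hcompl : (S ×ˢ (Set.univ : Set ℝ))ᶜ = Sᶜ ×ˢ (Set.univ : Set ℝ) := by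
        ext z; simp [Set.mem_prod]
      rw [hcompl, Measure.prod_prod, hSc, zero_mul]
    show ∀ᵐ x ∂(suspMeasure T μ), _
    rw [ae_iff]
    refine measure_mono_null ?_ hν
    intro x hx
    simp only [Set.mem_setOf_eq] at hx
    by_contra hxc
    apply hx
    rw [Set.notMem_compl_iff] at hxc
    obtain ⟨⟨ω, t⟩, ⟨hωS, -⟩, rfl⟩ := hxc
    intro g' hg'c hg'
    have hgs : ∀ s : ℝ, g (suspFlow T s (Quot.mk (suspRel T) (ω, t)))
        = ((((m:ℝ)/(p:ℝ)) * (t+s) + (m:ℝ)*((idx ω : ℤ):ℝ)/(p:ℝ) : ℝ) : AddCircle (1:ℝ)) := by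
      intro s
      rw [hflow]
      show F (ω, t + s) = _
      show ((c ω * (t+s) + d ω : ℝ) : AddCircle (1:ℝ)) = _
      simp only [hcdef, hddef, if_pos hωS]
    have hint : ∀ s, ∃ kk : ℤ,
        (fun s => g' s - (((m:ℝ)/(p:ℝ)) * (t+s) + (m:ℝ)*((idx ω : ℤ):ℝ)/(p:ℝ))) s = kk := by
      intro s
      apply Stmt16Helper.coe_eq_coe_iff.mp
      rw [hg' s, hgs s]
    have huc : Continuous
        (fun s => g' s - (((m:ℝ)/(p:ℝ)) * (t+s) + (m:ℝ)*((idx ω : ℤ):ℝ)/(p:ℝ))) := by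
      apply hg'c.sub
      apply Continuous.add _ continuous_const
      exact continuous_const.mul (continuous_const.add continuous_id)
    have hconst := Stmt16Helper.const_of_forall_int huc hint
    set C : ℝ := ((m:ℝ)/(p:ℝ)) * t + (m:ℝ)*((idx ω : ℤ):ℝ)/(p:ℝ)
      + (g' 0 - (((m:ℝ)/(p:ℝ)) * (t+0) + (m:ℝ)*((idx ω : ℤ):ℝ)/(p:ℝ))) with hCdef
    have hform : ∀ s, g' s = ((m:ℝ)/(p:ℝ)) * s + C := by
      intro s
      have h21 := hconst s
      rw [hCdef]
      linarith
    have := Stmt16Helper.tendsto_affine ((m:ℝ)/(p:ℝ)) C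
    apply Tendsto.congr _ this
    intro s
    rw [hform s]

end
end
end

section
/- Let Ω = ℤ/3ℤ with the discrete topology, T: Ω → Ω the automorphism ω ↦ 2ω, and μ the uniform measure on {1,2} ⊆ ℤ/3ℤ. Then: (i) μ is T-ergodic; (ii) the set of ν-a.e. rotation numbers of continuous maps from the suspension X of (Ω,T) to ℝ/ℤ equals (1/2)ℤ; (iii) the only group homomorphism χ: ℤ/3ℤ → ℝ/ℤ with χ∘T = χ is the trivial one, so that ∪_{χ: χ∘T = χ} π^{-1}(χ(0)) = ℤ. In particular (1/2)ℤ ≠ ℤ, so the identity 𝔄(Ω,T,μ) = ∪_{χ∈ker(Â−I)} π^{-1}(χ b) fails for this disconnected group with b = 0 (which lies in the path component of the identity). -/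
open MeasureTheory Filter Topology

noncomputable section

instance : TopologicalSpace (ZMod 3) := ⊥
instance : DiscreteTopology (ZMod 3) := ⟨rfl⟩
instance : MeasurableSpace (ZMod 3) := ⊤
instance : MeasurableSingletonClass (ZMod 3) := ⟨fun _ => trivial⟩

section Helpers
open Set

lemma const_of_int {d : ℝ → ℝ} (hd : Continuous d) (h : ∀ t, ∃ n : ℤ, d t = n) :
    ∀ t, d t = d 0 := by
  have key : ∀ a b : ℝ, d a < d b → False := by
    intro a b hab
    obtain ⟨m, hm⟩ := h a
    obtain ⟨n, hn⟩ := h b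
    have hmn : (m:ℝ) < n := by rw [← hm, ← hn]; exact hab
    have hmn' : m < n := by exact_mod_cast hmn
    have hmem : (m:ℝ) + 1/2 ∈ Icc (d a) (d b) := by
      constructor
      · rw [hm]; linarith
      · rw [hn]
        have : (m:ℝ) + 1 ≤ n := by exact_mod_cast hmn'
        linarith
    obtain ⟨c, hc⟩ := intermediate_value_univ a b hd hmem
    obtain ⟨j, hj⟩ := h c
    rw [hj] at hc
    have : (2*j : ℤ) = 2*m + 1 := by
      have : (2*j : ℝ) = 2*m + 1 := by push_cast; linarith
      exact_mod_cast this
    omega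
  intro t
  rcases lt_trichotomy (d t) (d 0) with h'|h'|h'
  · exact absurd h' (fun hh => key _ _ hh)
  · exact h'
  · exact absurd h' (fun hh => key _ _ hh)

lemma tendsto_affine {g : ℝ → ℝ} (hg : Continuous g) (a b : ℝ)
    (h : ∀ t, ((g t : ℝ) : AddCircle (1:ℝ)) = ((a + b * t : ℝ) : AddCircle (1:ℝ))) :
    Tendsto (fun t => g t / t) atTop (𝓝 b) := by
  set d : ℝ → ℝ := fun t => g t - (a + b * t) with hdd
  have hdc : Continuous d := hg.sub (by continuity)
  have hint : ∀ t, ∃ n : ℤ, d t = n := by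
    intro t
    have : ((d t : ℝ) : AddCircle (1:ℝ)) = 0 := by
      have := h t
      show ((g t - (a + b*t) : ℝ) : AddCircle (1:ℝ)) = 0
      rw [QuotientAddGroup.mk_sub, sub_eq_zero]
      exact this
    obtain ⟨n, hn⟩ := (AddCircle.coe_eq_zero_iff (1:ℝ)).mp this
    exact ⟨n, by simpa using hn.symm⟩
  have hconst := const_of_int hdc hint
  have hform : ∀ t, g t = (a + d 0) + b * t := by
    intro t
    have h1 := hconst t
    have h2 : d t = g t - (a + b*t) := rfl
    have h3 : d 0 = g 0 - (a + b*0) := rfl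
    rw [h2] at h1
    linarith
  have h0 : Tendsto (fun t : ℝ => (a + d 0) / t + b) atTop (𝓝 b) := by
    have : Tendsto (fun t : ℝ => (a + d 0) / t) atTop (𝓝 0) :=
      tendsto_const_nhds.div_atTop tendsto_id
    simpa using this.add tendsto_const_nhds
  apply h0.congr'
  filter_upwards [eventually_ge_atTop (1:ℝ)] with t ht
  rw [hform t]
  field_simp


section LiftLemma

local notation "π₁" => fun x : ℝ => ((x : ℝ) : AddCircle (1:ℝ))

lemma norm_half (r : ℝ) (hr : r = -2⁻¹) : ‖((r : ℝ) : AddCircle (1:ℝ))‖ = 2⁻¹ := by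
  rw [AddCircle.norm_eq, hr]
  norm_num [round_eq]

lemma exists_lift_aux (F : ℝ → AddCircle (1:ℝ)) (hF : Continuous F)
    (hsmall : ∀ s t : ℝ, |s - t| ≤ 1 → ‖F s - F t‖ < 2⁻¹) :
    ∃ G : ℝ → ℝ, Continuous G ∧ ∀ t, ((G t : ℝ) : AddCircle (1:ℝ)) = F t := by
  haveI : Fact ((0:ℝ) < 1) := ⟨one_pos⟩
  set a : ℝ := -(2⁻¹) with ha
  set e : AddCircle (1:ℝ) → ℝ := fun z => ((AddCircle.equivIco 1 a z : Ico a (a+1)) : ℝ) with he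
  have he_coe : ∀ z, ((e z : ℝ) : AddCircle (1:ℝ)) = z := by
    intro z
    exact (AddCircle.equivIco 1 a).symm_apply_apply z
  have he_eq : ∀ x : ℝ, x ∈ Ico a (a+1) → e ((x : ℝ) : AddCircle (1:ℝ)) = x := by
    intro x hx
    have : (AddCircle.equivIco 1 a) ((x : ℝ) : AddCircle (1:ℝ)) = ⟨x, hx⟩ := by
      rw [Equiv.apply_eq_iff_eq_symm_apply]; rfl
    simp [he, this]
  have he_zero : e 0 = 0 := by
    have h0 : ((0:ℝ) : AddCircle (1:ℝ)) = 0 := rfl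
    have := he_eq 0 (by constructor <;> norm_num [ha])
    rwa [h0] at this
  have he_cont : ∀ z : AddCircle (1:ℝ), z ≠ ((a:ℝ) : AddCircle (1:ℝ)) → ContinuousAt e z := by
    intro z hz
    exact continuousAt_subtype_val.comp (AddCircle.continuousAt_equivIco 1 a hz)
  have hne : ∀ s t : ℝ, |s - t| ≤ 1 → F s - F t ≠ ((a:ℝ) : AddCircle (1:ℝ)) := by
    intro s t hst heq
    have h1 := hsmall s t hst
    rw [heq, norm_half a ha] at h1
    exact lt_irrefl _ h1
  -- the step and partial sums
  set step : ℤ → ℝ := fun k => e (F ((k:ℝ) + 1) - F (k:ℝ)) with hstep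
  set S : ℤ → ℝ := fun k =>
    if 0 ≤ k then ∑ j ∈ Finset.range k.toNat, step j
    else -∑ j ∈ Finset.range (-k).toNat, step (k + j) with hSdef
  have hS0 : S 0 = 0 := by simp [hSdef]
  have hS : ∀ k : ℤ, S (k + 1) = S k + step k := by
    intro k
    rcases le_or_gt 0 k with hk | hk
    · have h1 : (0:ℤ) ≤ k + 1 := by omega
      have h2 : (k+1).toNat = k.toNat + 1 := by omega
      have h3 : ((k.toNat : ℤ)) = k := Int.toNat_of_nonneg hk
      simp only [hSdef, if_pos hk, if_pos h1, h2, Finset.sum_range_succ, h3]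
    · rcases eq_or_lt_of_le (by omega : k + 1 ≤ 0) with hk1 | hk1
      · -- k = -1
        have hkm : k = -1 := by omega
        subst hkm
        simp [hSdef]
      · -- k + 1 < 0
        have h1 : ¬ (0:ℤ) ≤ k := by omega
        have h2 : ¬ (0:ℤ) ≤ k + 1 := by omega
        have h3 : (-k).toNat = (-(k+1)).toNat + 1 := by omega
        simp only [hSdef, if_neg h1, if_neg h2, h3, Finset.sum_range_succ']
        have h4 : ∀ j : ℕ, step (k + (↑(j + 1) : ℤ)) = step (k + 1 + (↑j : ℤ)) := by
          intro j; congr 1; push_cast; ring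
        have h5 : step (k + ((0:ℕ) : ℤ)) = step k := by norm_num
        rw [Finset.sum_congr rfl (fun j _ => h4 j), h5]
        ring
  have hScoe : ∀ k : ℤ, ((e (F 0) + S k : ℝ) : AddCircle (1:ℝ)) = F (k:ℝ) := by
    intro k
    induction k using Int.induction_on with
    | zero => simp only [hS0, add_zero, he_coe]; norm_num
    | succ n ih =>
      rw [hS n, ← add_assoc, QuotientAddGroup.mk_add, ih, hstep]
      show F (n:ℝ) + ((e (F ((n:ℝ)+1) - F (n:ℝ)) : ℝ) : AddCircle (1:ℝ)) = _
      rw [he_coe, add_sub_cancel]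
      push_cast
      ring_nf
    | pred n ih =>
      have hrec := hS (-(n:ℤ) - 1)
      rw [show (-(n:ℤ) - 1) + 1 = -(n:ℤ) from by ring] at hrec
      have h2 : e (F 0) + S (-(n:ℤ) - 1) = (e (F 0) + S (-(n:ℤ))) - step (-(n:ℤ) - 1) := by
        rw [hrec]; ring
      rw [h2, QuotientAddGroup.mk_sub, ih]
      simp only [hstep]
      rw [he_coe]
      push_cast
      rw [show (-(n:ℝ) - 1) + 1 = -(n:ℝ) from by ring, sub_sub_cancel]
  -- the candidate lift
  set G : ℝ → ℝ := fun t => (e (F 0) + S ⌊t⌋) + e (F t - F (⌊t⌋ : ℝ)) with hG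
  refine ⟨G, ?_, ?_⟩
  · -- continuity
    set c : ℤ → Set ℝ := fun k => Icc (k:ℝ) ((k:ℝ)+1) with hc
    have hlf : LocallyFinite c := by
      intro t
      refine ⟨Ioo (t-1) (t+1), isOpen_Ioo.mem_nhds (by constructor <;> linarith), ?_⟩
      apply (Set.finite_Icc (⌈t-2⌉) (⌊t+1⌋)).subset
      rintro k ⟨x, ⟨hx1, hx2⟩, hx3, hx4⟩
      constructor
      · rw [Int.ceil_le]; push_cast; linarith
      · rw [Int.le_floor]; push_cast; linarith
    have hcov : ⋃ k, c k = univ := by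
      ext t
      simp only [mem_iUnion, mem_univ, iff_true, hc, mem_Icc]
      exact ⟨⌊t⌋, Int.floor_le t, by linarith [Int.lt_floor_add_one t]⟩
    have hcl : ∀ k, IsClosed (c k) := fun k => isClosed_Icc
    apply hlf.continuous hcov hcl
    intro k
    set h_k : ℝ → ℝ := fun t => (e (F 0) + S k) + e (F t - F (k:ℝ)) with hhk
    have heqon : EqOn G h_k (c k) := by
      intro t ht
      simp only [hc, mem_Icc] at ht
      rcases lt_or_eq_of_le ht.2 with h' | h'
      · have hfl : ⌊t⌋ = k := Int.floor_eq_iff.mpr ⟨ht.1, by push_cast; linarith⟩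
        simp only [hG, hhk, hfl]
      · have ht' : t = (k:ℝ) + 1 := h'.symm ▸ rfl
        have hfl : ⌊t⌋ = k + 1 := by
          rw [ht']
          rw [show ((k:ℝ) + 1) = ((k+1 : ℤ) : ℝ) by push_cast; ring]
          exact Int.floor_intCast _
        have hstepk : e (F t - F ((k:ℝ))) = step k := by
          rw [hstep, ht']
        simp only [hG, hhk, hfl]
        rw [show (((k+1:ℤ)):ℝ) = t by rw [ht']; push_cast; ring]
        rw [sub_self, he_zero, hS k, hstepk]
        ring
    apply ContinuousOn.congr _ heqon
    intro t ht
    simp only [hc, mem_Icc] at ht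
    apply ContinuousAt.continuousWithinAt
    have hz : F t - F (k:ℝ) ≠ ((a:ℝ) : AddCircle (1:ℝ)) := by
      apply hne
      rw [abs_le]
      constructor <;> linarith [ht.1, ht.2]
    have h6 : ContinuousAt (fun x : ℝ => F x - F (k:ℝ)) t := (hF.sub continuous_const).continuousAt
    have h7 : ContinuousAt (e ∘ fun x : ℝ => F x - F (k:ℝ)) t := ContinuousAt.comp (he_cont _ hz) h6
    have h8 : ContinuousAt (fun x : ℝ => e (F x - F (k:ℝ))) t := h7
    exact continuousAt_const.add h8
  · -- the lift property
    intro t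
    show ((_ + _ : ℝ) : AddCircle (1:ℝ)) = F t
    rw [QuotientAddGroup.mk_add, hScoe ⌊t⌋, he_coe, add_comm, sub_add_cancel]

end LiftLemma

lemma exists_lift (F : ℝ → AddCircle (1:ℝ)) (hF : Continuous F)
    (hper : ∀ t, F (t + 2) = F t) :
    ∃ G : ℝ → ℝ, Continuous G ∧ ∀ t, ((G t : ℝ) : AddCircle (1:ℝ)) = F t := by
  have hpF : Function.Periodic F 2 := hper
  -- uniform continuity on [-1, 3]
  have hucont := (isCompact_Icc (a := (-1:ℝ)) (b := 3)).uniformContinuousOn_of_continuous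
    hF.continuousOn
  rw [Metric.uniformContinuousOn_iff] at hucont
  obtain ⟨δ, hδ, hδ'⟩ := hucont 2⁻¹ (by norm_num)
  obtain ⟨N, hN⟩ := exists_nat_one_div_lt hδ
  set M : ℝ := (N:ℝ) + 1 with hM
  have hM0 : (0:ℝ) < M := by positivity
  have hM1 : (1:ℝ) ≤ M := by simp only [hM]; linarith [Nat.cast_nonneg (α := ℝ) N]
  have hmod : ∀ s t : ℝ, |s - t| ≤ 1/M → ‖F s - F t‖ < 2⁻¹ := by
    intro s t hst
    have hst1 : |s - t| ≤ 1 := hst.trans (by rw [div_le_one hM0]; exact hM1)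
    set k : ℤ := ⌊s/2⌋ with hk
    have hk1 : (k:ℝ) ≤ s/2 := Int.floor_le _
    have hk2 : s/2 < (k:ℝ) + 1 := Int.lt_floor_add_one _
    obtain ⟨ha1, ha2⟩ := abs_le.mp hst1
    have hs' : s - (k:ℝ)*2 ∈ Icc (-1:ℝ) 3 := ⟨by linarith, by linarith⟩
    have ht' : t - (k:ℝ)*2 ∈ Icc (-1:ℝ) 3 := ⟨by linarith, by linarith⟩
    have hFs : F (s - (k:ℝ)*2) = F s := hpF.sub_int_mul_eq k
    have hFt : F (t - (k:ℝ)*2) = F t := hpF.sub_int_mul_eq k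
    have hdist : dist (s - (k:ℝ)*2) (t - (k:ℝ)*2) < δ := by
      rw [Real.dist_eq]
      have : s - (k:ℝ)*2 - (t - (k:ℝ)*2) = s - t := by ring
      rw [this]
      calc |s - t| ≤ 1/M := hst
        _ = 1/((N:ℝ)+1) := by rw [hM]
        _ < δ := hN
    have := hδ' _ hs' _ ht' hdist
    rw [dist_eq_norm, hFs, hFt] at this
    exact this
  set F₁ : ℝ → AddCircle (1:ℝ) := fun u => F (u / M) with hF₁
  have hF₁c : Continuous F₁ := hF.comp (continuous_id.div_const M)
  have hF₁mod : ∀ u v : ℝ, |u - v| ≤ 1 → ‖F₁ u - F₁ v‖ < 2⁻¹ := by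
    intro u v huv
    apply hmod
    have : u/M - v/M = (u - v)/M := by ring
    rw [this, abs_div, abs_of_pos hM0]
    gcongr
  obtain ⟨G₁, hG₁c, hG₁coe⟩ := exists_lift_aux F₁ hF₁c hF₁mod
  refine ⟨fun t => G₁ (M * t), hG₁c.comp (continuous_const.mul continuous_id), ?_⟩
  intro t
  rw [hG₁coe (M * t)]
  simp only [hF₁]
  rw [mul_div_cancel_left₀ t (ne_of_gt hM0)]

end Helpers

set_option maxHeartbeats 2000000

/-- for the automorphism `T : ω ↦ 2ω` of `ℤ/3ℤ` and `μ` the uniform measure on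
`{1,2}`: (i) `μ` is `T`-ergodic; (ii) the set of ν-a.e. rotation numbers on the suspension is
`(1/2)ℤ`; (iii) the only `T`-invariant character of `ℤ/3ℤ` is trivial; in particular the set of
rotation numbers differs from `⋃_{χ∘T=χ} π⁻¹(χ 0) = ℤ`, so the Schwartzman-group identity fails
for this disconnected group (with `b = 0` in the path component of the identity). -/
theorem stmt_17 (T : Equiv.Perm (ZMod 3)) (hT : ∀ ω : ZMod 3, T ω = 2 * ω)
    (μ : Measure (ZMod 3))
    (hμ : μ = (2:ENNReal)⁻¹ • (Measure.dirac (1 : ZMod 3) + Measure.dirac (2 : ZMod 3))) :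
    Ergodic (T : ZMod 3 → ZMod 3) μ ∧
    (∀ β : ℝ,
      (∃ g : Susp T → AddCircle (1:ℝ), Continuous g ∧ IsRotNum T μ g β) ↔
        ∃ m : ℤ, β = m / 2) ∧
    (∀ χ : ZMod 3 →+ AddCircle (1:ℝ), (∀ ω, χ (T ω) = χ ω) → χ = 0) ∧
    {β : ℝ | ∃ g : Susp T → AddCircle (1:ℝ), Continuous g ∧ IsRotNum T μ g β} ≠
      {β : ℝ | ∃ χ : ZMod 3 →+ AddCircle (1:ℝ), Continuous χ ∧ (∀ ω, χ (T ω) = χ ω) ∧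
        ((β : ℝ) : AddCircle (1:ℝ)) = χ 0} := by
  subst hμ
  set μ : Measure (ZMod 3) := (2:ENNReal)⁻¹ • (Measure.dirac (1 : ZMod 3) + Measure.dirac (2 : ZMod 3)) with hμdef
  have trich : ∀ z : ZMod 3, z = 0 ∨ z = 1 ∨ z = 2 := by decide
  have hT0 : T 0 = 0 := by rw [hT]; decide
  have hT1 : T 1 = 2 := by rw [hT]; decide
  have hT2 : T 2 = 1 := by rw [hT]; decide
  have hTT : ∀ ω, T (T ω) = ω := by
    intro ω
    rw [hT, hT]
    revert ω; decide
  have hTmul : T * T = 1 := by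
    ext ω
    simp only [Equiv.Perm.mul_apply, Equiv.Perm.one_apply]
    exact hTT ω
  have hsq : T ^ (2:ℤ) = 1 := by
    rw [show (2:ℤ) = ((2:ℕ):ℤ) from rfl, zpow_natCast, pow_two]
    exact hTmul
  have hTn : ∀ n : ℤ, (∃ j : ℤ, n = 2*j ∧ T^n = 1) ∨ (∃ j : ℤ, n = 2*j + 1 ∧ T^n = T) := by
    intro n
    rcases Int.even_or_odd n with ⟨j, hj⟩ | ⟨j, hj⟩
    · exact Or.inl ⟨j, by omega, by rw [show n = 2*j from by omega, zpow_mul, hsq, one_zpow]⟩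
    · exact Or.inr ⟨j, hj, by
        rw [hj, zpow_add, zpow_mul, hsq, one_zpow, zpow_one, one_mul]⟩
  have hTz : ∀ n : ℤ, (T^n) (0:ZMod 3) = 0 := by
    intro n
    rcases hTn n with ⟨j, _, h⟩ | ⟨j, _, h⟩
    · rw [h]; rfl
    · rw [h]; exact hT0
  have hTmeas : Measurable (T : ZMod 3 → ZMod 3) := measurable_of_countable _
  have hμ0 : μ ({0} : Set (ZMod 3)) = 0 := by
    rw [hμdef, Measure.smul_apply, Measure.add_apply,
      Measure.dirac_apply' _ (measurableSet_singleton _),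
      Measure.dirac_apply' _ (measurableSet_singleton _)]
    rw [Set.indicator_of_notMem (by decide), Set.indicator_of_notMem (by decide)]
    simp
  -- part (i)
  have hi : Ergodic (T : ZMod 3 → ZMod 3) μ := by
    constructor
    · refine ⟨hTmeas, ?_⟩
      rw [hμdef, Measure.map_smul, Measure.map_add _ _ hTmeas,
        Measure.map_dirac' hTmeas, Measure.map_dirac' hTmeas, hT1, hT2, add_comm]
    · refine ⟨fun s hs hinv => ?_⟩
      have h12 : (1:ZMod 3) ∈ s ↔ (2:ZMod 3) ∈ s := by
        nth_rewrite 1 [← hinv]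
        rw [Set.mem_preimage, hT1]
      rw [Filter.eventuallyConst_set]
      by_cases h1 : (1:ZMod 3) ∈ s
      · left
        rw [Filter.eventually_iff, mem_ae_iff]
        apply measure_mono_null _ hμ0
        intro x hx
        simp only [Set.mem_compl_iff, Set.mem_setOf_eq] at hx
        rcases trich x with h|h|h
        · exact h ▸ rfl
        · exact absurd (h ▸ h1) hx
        · exact absurd (h ▸ (h12.mp h1)) hx
      · right
        rw [Filter.eventually_iff, mem_ae_iff]
        have hcc : {x | x ∉ s}ᶜ = s := by ext x; simp
        rw [hcc]
        apply measure_mono_null _ hμ0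
        intro x hx
        rcases trich x with h|h|h
        · exact h ▸ rfl
        · exact absurd (h ▸ hx) h1
        · exact absurd (h12.mpr (h ▸ hx)) h1
  -- part (iii)
  have hiii : ∀ χ : ZMod 3 →+ AddCircle (1:ℝ), (∀ ω, χ (T ω) = χ ω) → χ = 0 := by
    intro χ hχ
    have h2eq : (2:ZMod 3) = 1 + 1 := by decide
    have h1 : χ 1 = 0 := by
      have h := hχ 1
      rw [hT1, h2eq, map_add] at h
      exact add_eq_right.mp h
    ext ω
    rw [AddMonoidHom.zero_apply]
    rcases trich ω with h|h|h <;> subst h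
    · exact map_zero χ
    · exact h1
    · rw [h2eq, map_add, h1, add_zero]
  -- an elementary fact about AddCircle 1
  have hdiff : ∀ x y : ℝ, (∃ n : ℤ, x - y = (n:ℝ)) →
      ((x : ℝ) : AddCircle (1:ℝ)) = ((y : ℝ) : AddCircle (1:ℝ)) := by
    rintro x y ⟨n, hn⟩
    have hx : x = y + (n:ℝ) := by linarith
    rw [hx, QuotientAddGroup.mk_add]
    have h0 : (((n:ℝ)) : AddCircle (1:ℝ)) = 0 :=
      (AddCircle.coe_eq_zero_iff (1:ℝ)).mpr ⟨n, by simp⟩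
    rw [h0, add_zero]
  -- part (ii), backward direction: every m/2 is realized
  have hii_b : ∀ m : ℤ, ∃ g : Susp T → AddCircle (1:ℝ),
      Continuous g ∧ IsRotNum T μ g ((m:ℝ)/2) := by
    intro m
    set aa : ZMod 3 → ℝ := fun ω => if ω = 2 then (m:ℝ)/2 else 0 with haa
    set ss : ZMod 3 → ℝ := fun ω => if ω = 0 then 0 else (m:ℝ)/2 with hss
    have haa0 : aa 0 = 0 := if_neg (by decide)
    have haa1 : aa 1 = 0 := if_neg (by decide)
    have haa2 : aa 2 = (m:ℝ)/2 := if_pos rfl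
    have hss0 : ss 0 = 0 := if_pos rfl
    have hss1 : ss 1 = (m:ℝ)/2 := if_neg (by decide)
    have hss2 : ss 2 = (m:ℝ)/2 := if_neg (by decide)
    set Gf : ZMod 3 × ℝ → AddCircle (1:ℝ) :=
      fun p => ((aa p.1 + ss p.1 * p.2 : ℝ) : AddCircle (1:ℝ)) with hGf
    have hcompat : ∀ p q, suspRel T p q → Gf p = Gf q := by
      rintro ⟨ω, t⟩ ⟨ω', t'⟩ ⟨n, h1, h2⟩
      simp only at h1 h2
      subst h1
      subst h2
      simp only [hGf]
      rcases hTn n with ⟨j, hj, hTe⟩ | ⟨j, hj, hTe⟩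
      · rw [hTe]
        simp only [Equiv.Perm.one_apply]
        apply hdiff
        rcases trich ω with h|h|h <;> subst h
        · exact ⟨0, by rw [haa0, hss0]; push_cast; ring⟩
        · exact ⟨m*j, by rw [haa1, hss1]; subst hj; push_cast; ring⟩
        · exact ⟨m*j, by rw [haa2, hss2]; subst hj; push_cast; ring⟩
      · rw [hTe]
        apply hdiff
        rcases trich ω with h|h|h <;> subst h
        · rw [hT0]; exact ⟨0, by rw [haa0, hss0]; push_cast; ring⟩
        · rw [hT1]; exact ⟨m*j, by rw [haa1, hss1, haa2, hss2]; subst hj; push_cast; ring⟩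
        · rw [hT2]; exact ⟨m*(j+1), by rw [haa1, hss1, haa2, hss2]; subst hj; push_cast; ring⟩
    set g : Susp T → AddCircle (1:ℝ) := Quot.lift Gf hcompat with hg
    have hGfc : Continuous Gf := by
      apply Continuous.comp
      · exact AddCircle.continuous_mk' (p := (1:ℝ))
      · exact ((continuous_of_discreteTopology (f := aa)).comp continuous_fst).add
          (((continuous_of_discreteTopology (f := ss)).comp continuous_fst).mul continuous_snd)
    have hgc : Continuous g := continuous_quot_lift hcompat hGfc
    have hinv0 : ∀ p q : ZMod 3 × ℝ, suspRel T p q → (p.1 = (0:ZMod 3)) = (q.1 = 0) := by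
      rintro ⟨ω, t⟩ ⟨ω', t'⟩ ⟨n, h1, h2⟩
      simp only at h1
      subst h1
      apply propext
      constructor
      · rintro rfl; exact hTz n
      · intro h
        exact (T^n).injective (h.trans (hTz n).symm)
    set B : Set (Susp T) := {x | Quot.lift (fun p : ZMod 3 × ℝ => p.1 = (0:ZMod 3)) hinv0 x}
      with hB
    have hBmeas : MeasurableSet B := measurable_fst (measurableSet_singleton (0:ZMod 3))
    have hB0 : suspMeasure T μ B = 0 := by
      rw [suspMeasure, Measure.map_apply measurable_quot_mk hBmeas]
      have hpre : Quot.mk (suspRel T) ⁻¹' B = Prod.fst ⁻¹' ({0} : Set (ZMod 3)) := rfl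
      rw [hpre, ← Set.prod_univ, Measure.prod_prod, hμ0, zero_mul]
    refine ⟨g, hgc, ?_⟩
    unfold IsRotNum
    rw [ae_iff]
    apply measure_mono_null _ hB0
    intro x hx
    simp only [Set.mem_setOf_eq] at hx
    obtain ⟨p, hp⟩ := Quot.exists_rep x
    obtain ⟨ω, t0⟩ := p
    rw [← hp] at hx ⊢
    show ω = (0:ZMod 3)
    by_contra hω
    apply hx
    intro g' hg'c hg'lift
    have hssω : ss ω = (m:ℝ)/2 := by
      rcases trich ω with h|h|h
      · exact absurd h hω
      · subst h; exact hss1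
      · subst h; exact hss2
    have key : ∀ t : ℝ, ((g' t : ℝ) : AddCircle (1:ℝ)) =
        (((aa ω + ss ω * t0) + ((m:ℝ)/2) * t : ℝ) : AddCircle (1:ℝ)) := by
      intro t
      rw [hg'lift t]
      show Gf (ω, t0 + t) = _
      simp only [hGf]
      congr 1
      rw [hssω]
      ring
    exact tendsto_affine hg'c _ _ key
  -- part (ii), forward direction
  have hii_f : ∀ β : ℝ, (∃ g : Susp T → AddCircle (1:ℝ), Continuous g ∧ IsRotNum T μ g β) →
      ∃ m : ℤ, β = m / 2 := by
    rintro β ⟨g, hgc, hrot⟩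
    unfold IsRotNum suspMeasure at hrot
    have hae := ae_of_ae_map measurable_quot_mk.aemeasurable hrot
    rw [ae_iff] at hae
    have hpos : (μ.prod (volume.restrict (Set.Ioc (0:ℝ) 1)))
        (({1} : Set (ZMod 3)) ×ˢ Set.Ioc (0:ℝ) 1) ≠ 0 := by
      rw [Measure.prod_prod, Measure.restrict_apply measurableSet_Ioc, Set.inter_self,
        Real.volume_Ioc]
      have hμ1 : μ ({1} : Set (ZMod 3)) = 2⁻¹ := by
        rw [hμdef, Measure.smul_apply, Measure.add_apply,
          Measure.dirac_apply' _ (measurableSet_singleton _),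
          Measure.dirac_apply' _ (measurableSet_singleton _),
          Set.indicator_of_mem (Set.mem_singleton (1:ZMod 3)),
          Set.indicator_of_notMem (show (2:ZMod 3) ∉ ({1}:Set (ZMod 3)) by decide)]
        simp
      rw [hμ1]
      simp
    obtain ⟨q, hq1, hq2⟩ := Set.not_subset.mp (fun hsub => hpos (measure_mono_null hsub hae))
    rw [Set.mem_setOf_eq, not_not] at hq2
    obtain ⟨ω, t0⟩ := q
    obtain ⟨hqω, -⟩ := hq1
    have hω : ω = 1 := hqω
    subst hω
    set F : ℝ → AddCircle (1:ℝ) := fun t => g (Quot.mk (suspRel T) (1, t0 + t)) with hF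
    have hFc : Continuous F :=
      hgc.comp (continuous_quot_mk.comp (by continuity))
    have hper : ∀ t, F (t + 2) = F t := by
      intro t
      simp only [hF]
      congr 1
      apply Quot.sound
      refine ⟨2, ?_, ?_⟩
      · show (1:ZMod 3) = (T ^ (2:ℤ)) 1
        rw [hsq]; rfl
      · show t0 + t = t0 + (t + 2) - ((2:ℤ):ℝ)
        push_cast; ring
    obtain ⟨g', hg'c, hg'coe⟩ := exists_lift F hFc hper
    have htend : Tendsto (fun t => g' t / t) atTop (𝓝 β) := by
      apply hq2 g' hg'c
      intro t
      rw [hg'coe t]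
      rfl
    set d : ℝ → ℝ := fun t => g' (t + 2) - g' t with hd
    have hdc : Continuous d := (hg'c.comp (continuous_id.add continuous_const)).sub hg'c
    have hdint : ∀ t, ∃ n : ℤ, d t = n := by
      intro t
      have hz : ((d t : ℝ) : AddCircle (1:ℝ)) = 0 := by
        simp only [hd]
        rw [QuotientAddGroup.mk_sub, hg'coe, hg'coe, hper, sub_self]
      obtain ⟨n, hn⟩ := (AddCircle.coe_eq_zero_iff (1:ℝ)).mp hz
      exact ⟨n, by simpa using hn.symm⟩
    have hconst := const_of_int hdc hdint
    obtain ⟨mz, hmz⟩ := hdint 0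
    have hseq : ∀ n : ℕ, g' (2*(n:ℝ)) = g' 0 + (n:ℝ) * d 0 := by
      intro n
      induction n with
      | zero => norm_num
      | succ k ih =>
        push_cast
        rw [show (2*((k:ℝ)+1)) = (2*(k:ℝ)) + 2 from by ring]
        have h2 : g' (2*(k:ℝ) + 2) = g' (2*(k:ℝ)) + d (2*(k:ℝ)) := by
          simp only [hd]; ring
        rw [h2, hconst (2*(k:ℝ)), ih]
        ring
    have hseq2 : Tendsto (fun n : ℕ => (2*(n:ℝ))) atTop atTop :=
      (tendsto_natCast_atTop_atTop (R := ℝ)).const_mul_atTop two_pos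
    have h1 : Tendsto (fun n : ℕ => g' (2*(n:ℝ)) / (2*(n:ℝ))) atTop (𝓝 β) :=
      htend.comp hseq2
    have h2 : Tendsto (fun n : ℕ => g' (2*(n:ℝ)) / (2*(n:ℝ))) atTop (𝓝 ((mz:ℝ)/2)) := by
      have heq : ∀ᶠ n : ℕ in atTop,
          g' 0 / (2*(n:ℝ)) + (mz:ℝ)/2 = g' (2*(n:ℝ)) / (2*(n:ℝ)) := by
        filter_upwards [eventually_ge_atTop 1] with n hn
        have hn' : (1:ℝ) ≤ (n:ℝ) := by exact_mod_cast hn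
        have h2n : (2*(n:ℝ)) ≠ 0 := by positivity
        rw [hseq n, hmz]
        field_simp
      apply Tendsto.congr' heq
      have hz : Tendsto (fun n : ℕ => g' 0 / (2*(n:ℝ))) atTop (𝓝 0) :=
        tendsto_const_nhds.div_atTop hseq2
      simpa using hz.add tendsto_const_nhds
    exact ⟨mz, tendsto_nhds_unique h1 h2⟩
  have hii : ∀ β : ℝ,
      (∃ g : Susp T → AddCircle (1:ℝ), Continuous g ∧ IsRotNum T μ g β) ↔
        ∃ m : ℤ, β = m / 2 := by
    intro β
    constructor
    · exact hii_f β
    · rintro ⟨m, hm⟩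
      rw [hm]
      exact hii_b m
  refine ⟨hi, hii, hiii, ?_⟩
  intro hset
  have h12 : (1/2 : ℝ) ∈ {β : ℝ | ∃ g : Susp T → AddCircle (1:ℝ),
      Continuous g ∧ IsRotNum T μ g β} := (hii (1/2)).mpr ⟨1, by norm_num⟩
  rw [hset] at h12
  obtain ⟨χ, hχc, hχinv, hχval⟩ := h12
  rw [hiii χ hχinv] at hχval
  simp only [AddMonoidHom.zero_apply] at hχval
  obtain ⟨n, hn⟩ := (AddCircle.coe_eq_zero_iff (1:ℝ)).mp hχval
  have hn' : (n:ℝ) = 1/2 := by simpa using hn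
  have h2n : (2*n : ℤ) = 1 := by
    have h : (2*n : ℝ) = 1 := by rw [hn']; norm_num
    exact_mod_cast h
  omega

end
end

section
/- Let Ω be a compact connected abelian topological group, A: Ω → Ω a continuous group automorphism, and X₀ = (Ω × [0,1])/((ω,1) ∼ (Aω, 0)) the suspension of (Ω, A). Suppose h: X₀ → ℝ/ℤ is continuous and satisfies: h([ω,0]) = 0 for all ω ∈ Ω; h([0,t]) = 0 for all t ∈ [0,1]; and for each t ∈ [0,1] the map ω ↦ h([ω,t]) from Ω to ℝ/ℤ is nullhomotopic. Then h is nullhomotopic; equivalently, there exists a continuous h̃: X₀ → ℝ with π∘h̃ = h. -/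
open MeasureTheory Filter Topology

set_option maxHeartbeats 1000000

noncomputable section

/-- The identification `(ω, 1) ∼ (S ω, 0)` defining the suspension `(Ω × [0,1])/∼`. -/
def suspRelI {Ω : Type*} (S : Ω → Ω) :
    Ω × (Set.Icc (0:ℝ) 1) → Ω × (Set.Icc (0:ℝ) 1) → Prop :=
  fun p q => (p.2 : ℝ) = 1 ∧ (q.2 : ℝ) = 0 ∧ q.1 = S p.1

/-- The suspension `X = (Ω × [0,1])/((ω,1) ∼ (S ω, 0))`. -/
abbrev SuspI {Ω : Type*} (S : Ω → Ω) := Quot (suspRelI S)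


namespace Stmt18Aux

local instance : Fact ((0:ℝ) < 1) := ⟨one_pos⟩

/-- A local section of `ℝ → ℝ/ℤ`, with branch cut at `-1/2`. -/
def sec (x : AddCircle (1:ℝ)) : ℝ :=
  ((AddCircle.equivIco 1 (-(1/2)) x : Set.Ico (-(1/2):ℝ) (-(1/2)+1)) : ℝ)

lemma sec_coe (x : AddCircle (1:ℝ)) : ((sec x : ℝ) : AddCircle (1:ℝ)) = x :=
  (AddCircle.equivIco 1 (-(1/2))).symm_apply_apply x

lemma sec_zero : sec (0 : AddCircle (1:ℝ)) = 0 := by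
  have h0 : (0:ℝ) ∈ Set.Ico (-(1/2):ℝ) (-(1/2)+1) := by norm_num
  have h00 : ((0:ℝ) : AddCircle (1:ℝ)) = 0 := by norm_cast
  have : AddCircle.equivIco 1 (-(1/2)) (((0:ℝ) : AddCircle (1:ℝ))) = ⟨0, h0⟩ := by
    rw [Equiv.apply_eq_iff_eq_symm_apply]
    rfl
  unfold sec
  rw [← h00, this]

lemma sec_continuousAt {x : AddCircle (1:ℝ)} (hx : ‖x‖ < 1/2) : ContinuousAt sec x := by
  have hne : x ≠ ((-(1/2) : ℝ) : AddCircle (1:ℝ)) := by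
    intro hEq
    have hv : ‖((-(1/2):ℝ) : AddCircle (1:ℝ))‖ = |(-(1/2):ℝ)| :=
      (AddCircle.norm_coe_eq_abs_iff (p := (1:ℝ)) (x := -(1/2)) (by norm_num)).mpr
        (by rw [abs_neg, abs_of_nonneg] <;> norm_num)
    rw [hEq, hv, abs_neg, abs_of_nonneg (by norm_num : (0:ℝ) ≤ 1/2)] at hx
    linarith
  exact continuousAt_subtype_val.comp (AddCircle.continuousAt_equivIco (1:ℝ) (-(1/2)) hne)

lemma intval_eq {Ω : Type*} [TopologicalSpace Ω] [PreconnectedSpace Ω] {f : Ω → ℝ}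
    (hf : Continuous f) (hi : ∀ x, ∃ k : ℤ, f x = k) (x y : Ω) : f x = f y := by
  by_contra hne
  wlog hlt : f x < f y generalizing x y
  · exact this y x (Ne.symm hne) (lt_of_le_of_ne (not_lt.mp hlt) (Ne.symm hne))
  obtain ⟨k, hk⟩ := hi x
  obtain ⟨m, hm⟩ := hi y
  have hkm : k < m := by exact_mod_cast hk ▸ hm ▸ hlt
  have hz : (k:ℝ) + 1/2 ∈ Set.Icc (f x) (f y) := by
    constructor
    · rw [hk]; norm_num
    · rw [hm]
      have : (k:ℝ) + 1 ≤ m := by exact_mod_cast hkm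
      linarith
  have hpre : IsPreconnected (Set.range f) := isPreconnected_range hf
  have hmem := hpre.Icc_subset ⟨x, rfl⟩ ⟨y, rfl⟩ hz
  obtain ⟨w, hw⟩ := hmem
  obtain ⟨j, hj⟩ := hi w
  rw [hj] at hw
  have h2 : (2*j : ℝ) = 2*k + 1 := by linarith
  have h3 : (2*j : ℤ) = 2*k + 1 := by exact_mod_cast h2
  omega

end Stmt18Aux

/-- if `h : X₀ → ℝ/ℤ` is continuous, vanishes on the fiber `Ω × {0}` and on the
circle `{0} × [0,1]`, and each fiber map `ω ↦ h([ω,t])` is nullhomotopic, then `h` is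
nullhomotopic; equivalently, `h` admits a continuous lift `h̃ : X₀ → ℝ`. -/
theorem stmt_18 {Ω : Type*} [TopologicalSpace Ω] [AddCommGroup Ω] [IsTopologicalAddGroup Ω]
    [CompactSpace Ω] [ConnectedSpace Ω] [T2Space Ω]
    (A : Ω ≃+ Ω) (hA : Continuous A) (hA' : Continuous A.symm)
    (h : C(SuspI (fun ω => A ω), AddCircle (1:ℝ)))
    (h0 : ∀ ω : Ω, h (Quot.mk (suspRelI (fun ω => A ω)) (ω, ⟨0, by norm_num⟩)) = 0)
    (hS : ∀ t : Set.Icc (0:ℝ) 1, h (Quot.mk (suspRelI (fun ω => A ω)) (0, t)) = 0)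
    (hfib : ∀ t : Set.Icc (0:ℝ) 1,
      ContinuousMap.Nullhomotopic
        (⟨fun ω : Ω => h (Quot.mk (suspRelI (fun ω => A ω)) (ω, t)),
          h.continuous.comp (continuous_quot_mk.comp (continuous_id.prodMk continuous_const))⟩ :
            C(Ω, AddCircle (1:ℝ)))) :
    h.Nullhomotopic ∧
      ∃ H : C(SuspI (fun ω => A ω), ℝ), ∀ x, ((H x : ℝ) : AddCircle (1:ℝ)) = h x := by
  classical
  set g : Ω × Set.Icc (0:ℝ) 1 → AddCircle (1:ℝ) :=
    fun p => h (Quot.mk (suspRelI (fun ω => A ω)) p) with hg_def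
  have hgc : Continuous g := h.continuous.comp continuous_quot_mk
  have hg0 : ∀ (ω : Ω) (t : Set.Icc (0:ℝ) 1), (t:ℝ) = 0 → g (ω, t) = 0 := by
    intro ω t ht
    have : t = ⟨0, by norm_num⟩ := Subtype.ext ht
    rw [hg_def, this]; exact h0 ω
  have hg1 : ∀ (ω : Ω) (t : Set.Icc (0:ℝ) 1), (t:ℝ) = 1 → g (ω, t) = 0 := by
    intro ω t ht
    have hq : Quot.mk (suspRelI (fun ω => A ω)) (ω, t) =
        Quot.mk (suspRelI (fun ω => A ω)) (A ω, ⟨0, by norm_num⟩) :=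
      Quot.sound ⟨ht, rfl, rfl⟩
    rw [hg_def]; dsimp only
    rw [hq]; exact h0 (A ω)
  have hgS : ∀ t : Set.Icc (0:ℝ) 1, g (0, t) = 0 := hS
  -- uniform modulus of continuity in the time variable
  obtain ⟨N, hN, hstep⟩ : ∃ N : ℕ, 0 < N ∧ ∀ (ω : Ω) (t s : Set.Icc (0:ℝ) 1),
      |(t:ℝ) - (s:ℝ)| ≤ 1/N → ‖g (ω, t) - g (ω, s)‖ < 1/2 := by
    set K : Set (Ω × (Set.Icc (0:ℝ) 1 × Set.Icc (0:ℝ) 1)) :=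
      {q | 1/2 ≤ ‖g (q.1, q.2.1) - g (q.1, q.2.2)‖} with hK_def
    have hc1 : Continuous fun q : Ω × (Set.Icc (0:ℝ) 1 × Set.Icc (0:ℝ) 1) =>
        g (q.1, q.2.1) - g (q.1, q.2.2) :=
      (hgc.comp (continuous_fst.prodMk (continuous_fst.comp continuous_snd))).sub
        (hgc.comp (continuous_fst.prodMk (continuous_snd.comp continuous_snd)))
    have hKcl : IsClosed K := isClosed_le continuous_const hc1.norm
    have hKcpt : IsCompact K := hKcl.isCompact
    by_cases hKne : K.Nonempty
    · have hφc : Continuous fun q : Ω × (Set.Icc (0:ℝ) 1 × Set.Icc (0:ℝ) 1) =>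
          |((q.2.1 : ℝ)) - ((q.2.2 : ℝ))| :=
        ((continuous_subtype_val.comp (continuous_fst.comp continuous_snd)).sub
          (continuous_subtype_val.comp (continuous_snd.comp continuous_snd))).abs
      obtain ⟨q0, hq0K, hmin⟩ := hKcpt.exists_isMinOn hKne hφc.continuousOn
      have hδpos : 0 < |((q0.2.1 : ℝ)) - ((q0.2.2 : ℝ))| := by
        rcases eq_or_lt_of_le (abs_nonneg (((q0.2.1 : ℝ)) - ((q0.2.2 : ℝ)))) with hq | hq
        · exfalso
          have : ((q0.2.1 : ℝ)) = ((q0.2.2 : ℝ)) := by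
            have := abs_eq_zero.mp hq.symm; linarith
          have ht : q0.2.1 = q0.2.2 := Subtype.ext this
          have := hq0K
          rw [hK_def] at this
          simp only [Set.mem_setOf_eq, ht, sub_self, norm_zero] at this
          linarith
        · exact hq
      obtain ⟨n, hn⟩ := exists_nat_one_div_lt hδpos
      refine ⟨n + 1, Nat.succ_pos n, fun ω t s hts => ?_⟩
      by_contra hge
      push_neg at hge
      have hmem : (ω, (t, s)) ∈ K := hge
      have h1 := hmin hmem
      have : |((q0.2.1 : ℝ)) - ((q0.2.2 : ℝ))| ≤ |(t:ℝ) - (s:ℝ)| := h1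
      have hlt : (1 : ℝ)/(n+1) < |((q0.2.1 : ℝ)) - ((q0.2.2 : ℝ))| := hn
      have hcast : ((n + 1 : ℕ) : ℝ) = (n : ℝ) + 1 := by push_cast; ring
      rw [hcast] at hts
      linarith
    · refine ⟨1, one_pos, fun ω t s _ => ?_⟩
      by_contra hge
      push_neg at hge
      exact hKne ⟨(ω, (t, s)), hge⟩
  have hNR : (0:ℝ) < N := by exact_mod_cast hN
  -- the subdivision points
  have hcmem : ∀ (k : ℕ) (t : Set.Icc (0:ℝ) 1), min (t:ℝ) (k / N) ∈ Set.Icc (0:ℝ) 1 := by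
    intro k t
    constructor
    · exact le_min t.2.1 (by positivity)
    · exact le_trans (min_le_left _ _) t.2.2
  set c : ℕ → Set.Icc (0:ℝ) 1 → Set.Icc (0:ℝ) 1 :=
    fun k t => ⟨min (t:ℝ) (k / N), hcmem k t⟩ with hc_def
  have hcc : ∀ k : ℕ, Continuous fun t : Set.Icc (0:ℝ) 1 => c k t :=
    fun k => (continuous_subtype_val.min continuous_const).subtype_mk _
  have hdiff : ∀ (k : ℕ) (t : Set.Icc (0:ℝ) 1),
      |((c (k+1) t : ℝ)) - ((c k t : ℝ))| ≤ 1/N := by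
    intro k t
    have hx1 : ((k + 1 : ℕ) : ℝ)/N = (k:ℝ)/N + 1/N := by push_cast; rw [add_div]
    have hval1 : ((c (k+1) t : ℝ)) = min (t:ℝ) ((k:ℝ)/N + 1/N) := by
      rw [hc_def]; dsimp only; rw [hx1]
    have hval0 : ((c k t : ℝ)) = min (t:ℝ) ((k:ℝ)/N) := rfl
    rw [hval1, hval0, abs_le]
    have hNinv : (0:ℝ) ≤ 1/N := by positivity
    constructor
    · have hm := min_le_min (le_refl (t:ℝ)) (by linarith : (k:ℝ)/N ≤ (k:ℝ)/N + 1/N)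
      linarith
    · rcases le_total (t:ℝ) ((k:ℝ)/N) with hax | hax
      · have h1 : min (t:ℝ) ((k:ℝ)/N + 1/N) ≤ (t:ℝ) := min_le_left _ _
        rw [min_eq_left hax]
        linarith
      · rw [min_eq_right hax]
        have h1 : min (t:ℝ) ((k:ℝ)/N + 1/N) ≤ (k:ℝ)/N + 1/N := min_le_right _ _
        linarith
  -- the explicit lift
  set G : Ω × Set.Icc (0:ℝ) 1 → ℝ := fun p =>
    ∑ k ∈ Finset.range N, Stmt18Aux.sec (g (p.1, c (k+1) p.2) - g (p.1, c k p.2)) with hG_def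
  have hsmall : ∀ (p : Ω × Set.Icc (0:ℝ) 1) (k : ℕ),
      ‖g (p.1, c (k+1) p.2) - g (p.1, c k p.2)‖ < 1/2 :=
    fun p k => hstep _ _ _ (hdiff k p.2)
  have hGcont : Continuous G := by
    rw [hG_def]
    refine continuous_finset_sum _ (fun k _ => ?_)
    have hqc : Continuous fun p : Ω × Set.Icc (0:ℝ) 1 =>
        g (p.1, c (k+1) p.2) - g (p.1, c k p.2) :=
      (hgc.comp (continuous_fst.prodMk ((hcc (k+1)).comp continuous_snd))).sub
        (hgc.comp (continuous_fst.prodMk ((hcc k).comp continuous_snd)))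
    refine continuous_iff_continuousAt.mpr fun p => ?_
    show ContinuousAt
      (Stmt18Aux.sec ∘ fun p : Ω × Set.Icc (0:ℝ) 1 => g (p.1, c (k+1) p.2) - g (p.1, c k p.2)) p
    exact ContinuousAt.comp (Stmt18Aux.sec_continuousAt (hsmall p k)) hqc.continuousAt
  have hcN : ∀ t : Set.Icc (0:ℝ) 1, c N t = t := by
    intro t
    apply Subtype.ext
    show min (t:ℝ) ((N:ℝ)/N) = (t:ℝ)
    rw [div_self (ne_of_gt hNR)]
    exact min_eq_left t.2.2
  have hc0 : ∀ t : Set.Icc (0:ℝ) 1, ((c 0 t : ℝ)) = 0 := by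
    intro t
    show min (t:ℝ) ((0:ℕ)/N : ℝ) = 0
    norm_num
    exact t.2.1
  have hGcoe : ∀ p : Ω × Set.Icc (0:ℝ) 1, ((G p : ℝ) : AddCircle (1:ℝ)) = g p := by
    intro p
    have hmap : ((G p : ℝ) : AddCircle (1:ℝ)) =
        ∑ k ∈ Finset.range N,
          ((Stmt18Aux.sec (g (p.1, c (k+1) p.2) - g (p.1, c k p.2)) : ℝ) : AddCircle (1:ℝ)) :=
      map_sum (QuotientAddGroup.mk' (AddSubgroup.zmultiples (1:ℝ))) _ _
    rw [hmap]
    simp only [Stmt18Aux.sec_coe]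
    rw [Finset.sum_range_sub (f := fun k => g (p.1, c k p.2))]
    rw [hcN p.2, hg0 p.1 (c 0 p.2) (hc0 p.2), sub_zero]
  have hG0 : ∀ (ω : Ω) (t : Set.Icc (0:ℝ) 1), (t:ℝ) = 0 → G (ω, t) = 0 := by
    intro ω t ht
    rw [hG_def]
    dsimp only
    have hck : ∀ k : ℕ, c k t = c 0 t := by
      intro k
      apply Subtype.ext
      show min (t:ℝ) ((k:ℝ)/N) = min (t:ℝ) ((0:ℕ)/N : ℝ)
      rw [ht]
      rw [min_eq_left (by positivity), min_eq_left (by norm_num)]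
    refine Finset.sum_eq_zero fun k _ => ?_
    rw [hck (k+1), hck k, sub_self, Stmt18Aux.sec_zero]
  have hG0' : ∀ t : Set.Icc (0:ℝ) 1, G (0, t) = 0 := by
    intro t
    rw [hG_def]
    dsimp only
    refine Finset.sum_eq_zero fun k _ => ?_
    rw [hgS (c (k+1) t), hgS (c k t), sub_self, Stmt18Aux.sec_zero]
  have hG1 : ∀ (ω : Ω) (t : Set.Icc (0:ℝ) 1), (t:ℝ) = 1 → G (ω, t) = 0 := by
    intro ω t ht
    have hint : ∀ ω' : Ω, ∃ k : ℤ, G (ω', t) = k := by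
      intro ω'
      have hz : ((G (ω', t) : ℝ) : AddCircle (1:ℝ)) = 0 := by
        rw [hGcoe (ω', t)]
        exact hg1 ω' t ht
      obtain ⟨n, hn⟩ := (AddCircle.coe_eq_zero_iff (1:ℝ)).mp hz
      exact ⟨n, by rw [← hn]; simp⟩
    have hconst := Stmt18Aux.intval_eq (f := fun ω' => G (ω', t))
      (hGcont.comp (continuous_id.prodMk continuous_const)) hint ω 0
    rw [hconst]
    exact hG0' t
  -- descend to the suspension
  have hcompat : ∀ a b, suspRelI (fun ω => A ω) a b → G a = G b := by
    rintro ⟨ω, t⟩ ⟨ω', t'⟩ ⟨h1, h2, _⟩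
    rw [hG1 ω t h1, hG0 ω' t' h2]
  set H : C(SuspI (fun ω => A ω), ℝ) :=
    ⟨Quot.lift G hcompat, continuous_quot_lift hcompat hGcont⟩ with hH_def
  have hπH : ∀ x, ((H x : ℝ) : AddCircle (1:ℝ)) = h x := by
    refine Quot.ind ?_
    intro p
    exact hGcoe p
  refine ⟨?_, H, hπH⟩
  -- nullhomotopy via the lift
  refine ⟨0, ⟨{
    toFun := fun q => (((1 - ((q.1 : unitInterval) : ℝ)) * H q.2 : ℝ) : AddCircle (1:ℝ))
    continuous_toFun := by
      apply Continuous.comp continuous_quotient_mk'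
      exact (continuous_const.sub (continuous_subtype_val.comp continuous_fst)).mul
        (H.continuous.comp continuous_snd)
    map_zero_left := by
      intro x
      show (((1 - ((0 : unitInterval) : ℝ)) * H x : ℝ) : AddCircle (1:ℝ)) = h x
      rw [show (1 - ((0 : unitInterval) : ℝ)) * H x = H x by norm_num]
      exact hπH x
    map_one_left := by
      intro x
      show (((1 - ((1 : unitInterval) : ℝ)) * H x : ℝ) : AddCircle (1:ℝ)) = _
      rw [show (1 - ((1 : unitInterval) : ℝ)) * H x = 0 by norm_num]
      show ((0:ℝ) : AddCircle (1:ℝ)) = 0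
      norm_cast }⟩⟩

end
end
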